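/- arXiv:1210.5487 — 8 statements merged into one kernel-verified Lean document; each statement's English description precedes it below -/
import Mathlib

section
/- Fix λ > 0 and r ∈ (0, 1/3). There exist constants C > 0 and h₀ > 0 such that for every h ∈ (0, h₀) with N := 1/(λh) a positive integer and every s ∈ [0, h^{−r}], the number P_N(ξ(s)) is strictly positive and | log P_N(ξ(s)) + s²/2 − (s⁴/24 + λ²s⁴/8 − λ²s⁶/48) h² | ≤ C (s⁸h³ + s⁶h⁴). -/
open Finset

set_option maxHeartbeats 8000000

open Complex in

lemma cos_taylor (x : ℝ) (hx : |x| ≤ 1) :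
    |Real.cos x - (1 - x ^ 2 / 2 + x ^ 4 / 24 - x ^ 6 / 720)| ≤ |x| ^ 8 := by
  have key : ∀ z : ℂ, ‖z‖ ≤ 1 →
      ‖Complex.exp z - ∑ m ∈ range 8, z ^ m / m.factorial‖
        ≤ ‖z‖ ^ 8 := by
    intro z hz
    have h := Complex.exp_bound hz (by norm_num : 0 < 8)
    calc ‖Complex.exp z - ∑ m ∈ range 8, z ^ m / m.factorial‖
        ≤ ‖z‖ ^ 8 * (8 + 1) * ((Nat.factorial 8 : ℝ) * 8)⁻¹ := by
          convert h using 1; push_cast; ring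
      _ ≤ ‖z‖ ^ 8 * 1 := by
          rw [mul_assoc]
          apply mul_le_mul_of_nonneg_left _ (by positivity)
          norm_num [Nat.factorial]
      _ = ‖z‖ ^ 8 := mul_one _
  have hxI : ‖(x : ℂ) * I‖ ≤ 1 := by simpa using hx
  have hxI' : ‖-(x : ℂ) * I‖ ≤ 1 := by simpa using hx
  have heq : ((Real.cos x : ℂ)) - (1 - (x:ℂ) ^ 2 / 2 + (x:ℂ) ^ 4 / 24 - (x:ℂ) ^ 6 / 720)
      = ((Complex.exp (x * I) - ∑ m ∈ range 8, ((x : ℂ) * I) ^ m / m.factorial)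
        + (Complex.exp (-x * I) - ∑ m ∈ range 8, (-(x : ℂ) * I) ^ m / m.factorial)) / 2 := by
    rw [Complex.ofReal_cos, Complex.cos]
    simp only [sum_range_succ, range_zero, sum_empty, Nat.factorial]
    push_cast
    apply Complex.ext <;> simp [pow_succ, div_eq_mul_inv] <;> ring_nf
  have h1 := key _ hxI
  have h2 := key _ hxI'
  have habs : |Real.cos x - (1 - x ^ 2 / 2 + x ^ 4 / 24 - x ^ 6 / 720)|
      = ‖((Real.cos x : ℂ)) - (1 - (x:ℂ) ^ 2 / 2 + (x:ℂ) ^ 4 / 24 - (x:ℂ) ^ 6 / 720)‖ := by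
    rw [← Real.norm_eq_abs, ← Complex.norm_real]; congr 1; push_cast; ring
  rw [habs, heq, norm_div, Complex.norm_two]
  have hadd := norm_add_le
    (Complex.exp (x * I) - ∑ m ∈ range 8, ((x : ℂ) * I) ^ m / m.factorial)
    (Complex.exp (-x * I) - ∑ m ∈ range 8, (-(x : ℂ) * I) ^ m / m.factorial)
  have e1 : ‖(x:ℂ)*I‖ = |x| := by simp
  have e2 : ‖-(x:ℂ)*I‖ = |x| := by simp
  rw [e1] at h1; rw [e2] at h2
  linarith

lemma log_one_sub_est {x : ℝ} (h0 : 0 ≤ x) (h12 : x ≤ 1/2) :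
    |Real.log (1 - x) + (x + x ^ 2 / 2 + x ^ 3 / 3)| ≤ 2 * x ^ 4 := by
  have hx : |x| < 1 := by rw [abs_of_nonneg h0]; linarith
  have h := Real.abs_log_sub_add_sum_range_le hx 3
  have hsum : (∑ i ∈ range 3, x ^ (i + 1) / (i + 1)) = x + x ^ 2 / 2 + x ^ 3 / 3 := by
    norm_num [Finset.sum_range_succ]
  rw [hsum] at h
  have hb : |x| ^ 4 / (1 - |x|) ≤ 2 * x ^ 4 := by
    rw [abs_of_nonneg h0]
    rw [div_le_iff₀ (by linarith)]
    nlinarith [pow_nonneg h0 4]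
  calc |Real.log (1 - x) + (x + x ^ 2 / 2 + x ^ 3 / 3)|
      = |x + x ^ 2 / 2 + x ^ 3 / 3 + Real.log (1 - x)| := by ring_nf
    _ ≤ |x| ^ 4 / (1 - |x|) := h
    _ ≤ 2 * x ^ 4 := hb

lemma log_one_add_est {x : ℝ} (h0 : 0 ≤ x) (h12 : x ≤ 1/2) :
    |Real.log (1 + x) - (x - x ^ 2 / 2 + x ^ 3 / 3)| ≤ 2 * x ^ 4 := by
  have hx : |(-x)| < 1 := by rw [abs_neg, abs_of_nonneg h0]; linarith
  have h := Real.abs_log_sub_add_sum_range_le hx 3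
  have hsum : (∑ i ∈ range 3, (-x) ^ (i + 1) / (i + 1)) = -x + x ^ 2 / 2 - x ^ 3 / 3 := by
    norm_num [Finset.sum_range_succ]; ring
  rw [hsum, show (1 : ℝ) - -x = 1 + x by ring] at h
  have hb : |(-x)| ^ 4 / (1 - |(-x)|) ≤ 2 * x ^ 4 := by
    rw [abs_neg, abs_of_nonneg h0, div_le_iff₀ (by linarith)]
    nlinarith [pow_nonneg h0 4]
  calc |Real.log (1 + x) - (x - x ^ 2 / 2 + x ^ 3 / 3)|
      = |-x + x ^ 2 / 2 - x ^ 3 / 3 + Real.log (1 + x)| := by ring_nf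
    _ ≤ |(-x)| ^ 4 / (1 - |(-x)|) := h
    _ ≤ 2 * x ^ 4 := hb

lemma sum_g (N : ℕ) (ξ : ℝ) :
    ∑ m ∈ range N, (-(2 * (m : ℝ) + 1) * ξ + (2 * (m : ℝ) + 1) * ξ ^ 2 / 2
        - ((m : ℝ) ^ 3 + ((m : ℝ) + 1) ^ 3) * ξ ^ 3 / 3)
      = -(N : ℝ) ^ 2 * ξ + (N : ℝ) ^ 2 * ξ ^ 2 / 2 - ((N : ℝ) ^ 4 + (N : ℝ) ^ 2) * ξ ^ 3 / 6 := by
  induction N with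
  | zero => simp
  | succ n ih =>
    rw [Finset.sum_range_succ, ih]
    push_cast
    ring

/-- The Crank–Nicolson Fourier symbol `P_N(ξ) = ∏_{m=0}^{N-1} (1 - mξ)/(1 + (m+1)ξ)`. -/
noncomputable def P (N : ℕ) (ξ : ℝ) : ℝ :=
  ∏ m ∈ Finset.range N, (1 - (m : ℝ) * ξ) / (1 + ((m : ℝ) + 1) * ξ)

/-- `ξ(s) = 2λ² sin²(sh/2)`. -/
noncomputable def xi (lam h s : ℝ) : ℝ := 2 * lam ^ 2 * Real.sin (s * h / 2) ^ 2

/-- low wave number (regime I) expansion of `log P_N(ξ(s))`. -/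
theorem stmt1 (lam r : ℝ) (hlam : 0 < lam) (hr : 0 < r) (hr3 : r < 1 / 3) :
    ∃ C > (0 : ℝ), ∃ h₀ > (0 : ℝ), ∀ h : ℝ, 0 < h → h < h₀ → ∀ N : ℕ, 0 < N →
      (N : ℝ) = 1 / (lam * h) → ∀ s : ℝ, 0 ≤ s → s ≤ h ^ (-r) →
      0 < P N (xi lam h s) ∧
      |Real.log (P N (xi lam h s)) + s ^ 2 / 2
          - (s ^ 4 / 24 + lam ^ 2 * s ^ 4 / 8 - lam ^ 2 * s ^ 6 / 48) * h ^ 2|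
        ≤ C * (s ^ 8 * h ^ 3 + s ^ 6 * h ^ 4) := by
  have hr2 : (0:ℝ) < 1 - 2*r := by linarith
  refine ⟨3 + 2*lam^2 + lam^3 + lam^4, by positivity,
    min 1 ((1+lam)⁻¹ ^ (1/(1-2*r))), lt_min one_pos (Real.rpow_pos_of_pos (by positivity) _), ?_⟩
  intro h hh0 hh₀ N hN0 hNe s hs0 hsr
  have hh1 : h < 1 := lt_of_lt_of_le hh₀ (min_le_left _ _)
  -- h^(1-2r) ≤ (1+lam)⁻¹
  have hsmall : h ^ (1 - 2*r) ≤ (1+lam)⁻¹ := by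
    have h2 : h < (1+lam)⁻¹ ^ (1/(1-2*r)) := lt_of_lt_of_le hh₀ (min_le_right _ _)
    have h3 : h ^ (1-2*r) < ((1+lam)⁻¹ ^ (1/(1-2*r))) ^ (1-2*r) :=
      Real.rpow_lt_rpow hh0.le h2 hr2
    have h4 : ((1+lam)⁻¹ ^ (1/(1-2*r))) ^ (1-2*r) = (1+lam)⁻¹ := by
      rw [← Real.rpow_mul (by positivity), one_div_mul_cancel (ne_of_gt hr2), Real.rpow_one]
    linarith [h3, h4.le, h3.le]
  -- s^2 * h ≤ h^(1-2r)
  have hs2h : s^2 * h ≤ h ^ (1 - 2*r) := by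
    have h1 : s^2 ≤ (h ^ (-r))^2 := pow_le_pow_left₀ hs0 hsr 2
    have h2 : (h ^ (-r))^(2:ℕ) = h ^ ((-r) * 2) := by
      rw [Real.rpow_mul hh0.le]
      norm_num
    have h3 : h ^ ((-r)*2) * h = h ^ (1 - 2*r) := by
      rw [show (1 - 2*r) = (-r)*2 + 1 by ring, Real.rpow_add hh0, Real.rpow_one]
    calc s^2 * h ≤ h ^ ((-r)*2) * h := by
          apply mul_le_mul_of_nonneg_right _ hh0.le
          rw [← h2]; exact h1
      _ = h ^ (1 - 2*r) := h3
  have hls2h : lam * (s^2 * h) ≤ 1 := by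
    have : lam * (s^2*h) ≤ lam * (1+lam)⁻¹ :=
      mul_le_mul_of_nonneg_left (hs2h.trans hsmall) hlam.le
    have h5 : lam * (1+lam)⁻¹ < 1 := by
      rw [mul_inv_lt_iff₀ (by positivity), one_mul]; linarith
    linarith
  -- s*h ≤ 1
  have hsh0 : 0 ≤ s * h := mul_nonneg hs0 hh0.le
  have hsh1 : s * h ≤ 1 := by
    have h1 : s * h ≤ h ^ (-r) * h := mul_le_mul_of_nonneg_right hsr hh0.le
    have h2 : h ^ (-r) * h = h ^ (1 - r) := by
      rw [show (1 - r) = -r + 1 by ring, Real.rpow_add hh0, Real.rpow_one]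
    have h3 : h ^ (1 - r) ≤ 1 := Real.rpow_le_one hh0.le hh1.le (by linarith)
    linarith [h1, h2.le, h2.ge]
  -- basic setup
  set v : ℝ := Real.sin (s * h / 2) ^ 2 with hv
  have hv0 : 0 ≤ v := sq_nonneg _
  have hvt : v ≤ (s*h)^2/4 := by
    have := Real.sin_sq_le_sq (x := s*h/2)
    rw [← hv] at this
    nlinarith [this]
  set ξ' : ℝ := 2 * lam^2 * v with hξ'
  have hξ'0 : 0 ≤ ξ' := by positivity
  have hxiv : xi lam h s = ξ' := by rw [xi, hξ', hv]
  have hlh : 0 < lam * h := mul_pos hlam hh0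
  -- N ξ' ≤ 1/2
  have hNξ : (N:ℝ) * ξ' ≤ 1/2 := by
    have h2 : ξ' ≤ lam * h / 2 := by
      rw [hξ']
      have k1 : 2*lam^2*v ≤ 2*lam^2*((s*h)^2/4) := mul_le_mul_of_nonneg_left hvt (by positivity)
      have k2 : lam*(s^2*h)*(lam*h) ≤ 1*(lam*h) := mul_le_mul_of_nonneg_right hls2h hlh.le
      linarith [k1, k2]
    rw [hNe, div_mul_eq_mul_div, one_mul, div_le_iff₀ hlh]
    linarith
  -- positivity of every factor
  have hfac : ∀ m ∈ range N, 0 < (1 - (m:ℝ) * ξ') / (1 + ((m:ℝ) + 1) * ξ') := by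
    intro m hm
    have hmN : (m:ℝ) ≤ N := by exact_mod_cast (Finset.mem_range.mp hm).le
    have : (m:ℝ) * ξ' ≤ 1/2 :=
      le_trans (mul_le_mul_of_nonneg_right hmN hξ'0) hNξ
    have hnum : 0 < 1 - (m:ℝ)*ξ' := by linarith
    have hden : 0 < 1 + ((m:ℝ)+1)*ξ' := by positivity
    exact div_pos hnum hden
  have hPpos : 0 < P N ξ' := by
    rw [P]; exact Finset.prod_pos hfac
  rw [hxiv]
  refine ⟨hPpos, ?_⟩
  -- log of product
  have hlogP : Real.log (P N ξ') =
      ∑ m ∈ range N, (Real.log (1 - (m:ℝ) * ξ') - Real.log (1 + ((m:ℝ) + 1) * ξ')) := by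
    rw [P, Real.log_prod (fun m hm => ne_of_gt (hfac m hm))]
    refine Finset.sum_congr rfl fun m hm => ?_
    have hmN : (m:ℝ) ≤ N := by exact_mod_cast (Finset.mem_range.mp hm).le
    have h1 : (m:ℝ) * ξ' ≤ 1/2 := le_trans (mul_le_mul_of_nonneg_right hmN hξ'0) hNξ
    exact Real.log_div (by nlinarith) (by positivity)
  -- per-term estimate
  have hterm : ∀ m ∈ range N,
      |(Real.log (1 - (m:ℝ) * ξ') - Real.log (1 + ((m:ℝ) + 1) * ξ'))
        - (-(2 * (m : ℝ) + 1) * ξ' + (2 * (m : ℝ) + 1) * ξ' ^ 2 / 2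
          - ((m : ℝ) ^ 3 + ((m : ℝ) + 1) ^ 3) * ξ' ^ 3 / 3)|
        ≤ 4 * ((N:ℝ) * ξ')^4 := by
    intro m hm
    have hmN : (m:ℝ) ≤ N := by exact_mod_cast (Finset.mem_range.mp hm).le
    have hm1N : (m:ℝ) + 1 ≤ N := by
      have := Finset.mem_range.mp hm
      exact_mod_cast Nat.succ_le_of_lt this
    have ha0 : 0 ≤ (m:ℝ) * ξ' := by positivity
    have hb0 : 0 ≤ ((m:ℝ)+1) * ξ' := by positivity
    have hbN : ((m:ℝ)+1) * ξ' ≤ (N:ℝ) * ξ' := mul_le_mul_of_nonneg_right hm1N hξ'0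
    have haN : (m:ℝ) * ξ' ≤ (N:ℝ) * ξ' := mul_le_mul_of_nonneg_right hmN hξ'0
    have hb2 : ((m:ℝ)+1) * ξ' ≤ 1/2 := le_trans hbN hNξ
    have ha2 : (m:ℝ) * ξ' ≤ 1/2 := le_trans haN hNξ
    have X := log_one_sub_est ha0 ha2
    have Y := log_one_add_est hb0 hb2
    have haN4 : ((m:ℝ) * ξ')^4 ≤ ((N:ℝ) * ξ')^4 := pow_le_pow_left₀ ha0 haN 4
    have hbN4 : (((m:ℝ)+1) * ξ')^4 ≤ ((N:ℝ) * ξ')^4 := pow_le_pow_left₀ hb0 hbN 4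
    have hfg : (Real.log (1 - (m:ℝ) * ξ') - Real.log (1 + ((m:ℝ) + 1) * ξ'))
        - (-(2 * (m : ℝ) + 1) * ξ' + (2 * (m : ℝ) + 1) * ξ' ^ 2 / 2
          - ((m : ℝ) ^ 3 + ((m : ℝ) + 1) ^ 3) * ξ' ^ 3 / 3)
        = (Real.log (1 - (m:ℝ) * ξ') + ((m:ℝ)*ξ' + ((m:ℝ)*ξ')^2/2 + ((m:ℝ)*ξ')^3/3))
          - (Real.log (1 + ((m:ℝ)+1) * ξ') - (((m:ℝ)+1)*ξ' - (((m:ℝ)+1)*ξ')^2/2 + (((m:ℝ)+1)*ξ')^3/3)) := by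
      ring
    rw [hfg, abs_le]
    rw [abs_le] at X Y
    constructor <;> linarith [X.1, X.2, Y.1, Y.2, haN4, hbN4]
  -- the summed estimate
  set S : ℝ := ∑ m ∈ range N, (Real.log (1 - (m:ℝ) * ξ') - Real.log (1 + ((m:ℝ) + 1) * ξ')) with hS
  have hsum1 : |S - (-(N : ℝ) ^ 2 * ξ' + (N : ℝ) ^ 2 * ξ' ^ 2 / 2
      - ((N : ℝ) ^ 4 + (N : ℝ) ^ 2) * ξ' ^ 3 / 6)| ≤ (N:ℝ) * (4 * ((N:ℝ) * ξ')^4) := by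
    rw [← sum_g N ξ', hS, ← Finset.sum_sub_distrib]
    refine (Finset.abs_sum_le_sum_abs _ _).trans ?_
    refine (Finset.sum_le_sum hterm).trans ?_
    rw [Finset.sum_const, Finset.card_range, nsmul_eq_mul]
  -- pass to the v-form
  have hh2 : (0:ℝ) < h^2 := by positivity
  have hh4 : (0:ℝ) < h^4 := by positivity
  have hA : -(N : ℝ) ^ 2 * ξ' + (N : ℝ) ^ 2 * ξ' ^ 2 / 2
      - ((N : ℝ) ^ 4 + (N : ℝ) ^ 2) * ξ' ^ 3 / 6
      = -2*v/h^2 + 2*lam^2*v^2/h^2 - (4/3)*lam^2*v^3/h^4 - (4/3)*lam^4*v^3/h^2 := by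
    rw [hNe, hξ']
    field_simp
    ring
  have hEb : (N:ℝ) * (4 * ((N:ℝ) * ξ')^4) ≤ lam^3 * s^8 * h^3 / 4 := by
    have he : (N:ℝ) * (4 * ((N:ℝ) * ξ')^4) = 64 * lam^3 * v^4 / h^5 := by
      rw [hNe, hξ']
      field_simp
      ring
    rw [he]
    have hv4 : v^4 ≤ ((s*h)^2/4)^4 := pow_le_pow_left₀ hv0 hvt 4
    rw [div_le_iff₀ (by positivity : (0:ℝ) < h^5)]
    have k1 : 64*lam^3*v^4 ≤ 64*lam^3*(((s*h)^2/4)^4) :=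
      mul_le_mul_of_nonneg_left hv4 (by positivity)
    linarith [k1]
  -- the cosine expansion
  have htle : |s*h| ≤ 1 := by rw [abs_of_nonneg hsh0]; exact hsh1
  have hcos := cos_taylor (s*h) htle
  rw [abs_of_nonneg hsh0] at hcos
  have hvcos : v = 1/2 - Real.cos (s*h) / 2 := by
    rw [hv, Real.sin_sq, Real.cos_sq, show 2*(s*h/2) = s*h by ring]
    ring
  have hE : |v - ((s*h)^2/4 - (s*h)^4/48 + (s*h)^6/1440)| ≤ (s*h)^8/2 := by
    have hid : v - ((s*h)^2/4 - (s*h)^4/48 + (s*h)^6/1440)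
        = -(Real.cos (s*h) - (1 - (s*h)^2/2 + (s*h)^4/24 - (s*h)^6/720))/2 := by
      rw [hvcos]; ring
    rw [hid, abs_div, abs_neg, abs_two]
    linarith
  -- polynomial bounds
  have p64 : (s*h)^6 ≤ (s*h)^4 := pow_le_pow_of_le_one hsh0 hsh1 (by norm_num)
  have p84 : (s*h)^8 ≤ (s*h)^4 := pow_le_pow_of_le_one hsh0 hsh1 (by norm_num)
  have b1 : |v - (s*h)^2/4| ≤ (s*h)^4 := by
    rw [abs_le]; rw [abs_le] at hE
    constructor <;>
      linarith [hE.1, hE.2, p64, p84, pow_nonneg hsh0 4, pow_nonneg hsh0 6, pow_nonneg hsh0 8]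
  have hvsum : |v + (s*h)^2/4| ≤ (s*h)^2/2 := by
    rw [abs_of_nonneg (by positivity)]
    linarith
  have b2 : |v^2 - (s*h)^4/16| ≤ (s*h)^6/2 := by
    have hid : v^2 - (s*h)^4/16 = (v - (s*h)^2/4) * (v + (s*h)^2/4) := by ring
    rw [hid, abs_mul]
    calc |v - (s*h)^2/4| * |v + (s*h)^2/4| ≤ (s*h)^4 * ((s*h)^2/2) :=
          mul_le_mul b1 hvsum (abs_nonneg _) (by positivity)
      _ = (s*h)^6/2 := by ring
  have b3 : |v^3 - (s*h)^6/64| ≤ (s*h)^8 := by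
    have hid : v^3 - (s*h)^6/64 = (v - (s*h)^2/4) * (v^2 + v*((s*h)^2/4) + ((s*h)^2/4)^2) := by
      ring
    rw [hid, abs_mul]
    have hsec : |v^2 + v*((s*h)^2/4) + ((s*h)^2/4)^2| ≤ 3*(s*h)^4/16 := by
      rw [abs_of_nonneg (by positivity)]
      have q1 : v*v ≤ ((s*h)^2/4)*((s*h)^2/4) := mul_le_mul hvt hvt hv0 (by positivity)
      have q2 : v*((s*h)^2/4) ≤ ((s*h)^2/4)*((s*h)^2/4) :=
        mul_le_mul_of_nonneg_right hvt (by positivity)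
      linarith [q1, q2]
    calc |v - (s*h)^2/4| * |v^2 + v*((s*h)^2/4) + ((s*h)^2/4)^2|
        ≤ (s*h)^4 * (3*(s*h)^4/16) := mul_le_mul b1 hsec (abs_nonneg _) (by positivity)
      _ ≤ (s*h)^8 := by linarith [pow_nonneg hsh0 8]
  have b4 : v^3 ≤ (s*h)^6/64 := by
    have := pow_le_pow_left₀ hv0 hvt 3
    calc v^3 ≤ ((s*h)^2/4)^3 := this
      _ = (s*h)^6/64 := by ring
  -- the decomposition of A - T
  have hAT : (-2*v/h^2 + 2*lam^2*v^2/h^2 - (4/3)*lam^2*v^3/h^4 - (4/3)*lam^4*v^3/h^2)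
      - (-(s^2/2) + (s ^ 4 / 24 + lam ^ 2 * s ^ 4 / 8 - lam ^ 2 * s ^ 6 / 48) * h ^ 2)
      = (-(s^6*h^4)/720 - 2*(v - ((s*h)^2/4 - (s*h)^4/48 + (s*h)^6/1440))/h^2)
        + 2*lam^2*(v^2 - (s*h)^4/16)/h^2
        - (4/3)*lam^2*(v^3 - (s*h)^6/64)/h^4
        - (4/3)*lam^4*v^3/h^2 := by
    field_simp
    ring
  -- bound each piece
  have c1 : |2*(v - ((s*h)^2/4 - (s*h)^4/48 + (s*h)^6/1440))/h^2| ≤ s^8*h^6 := by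
    rw [abs_div, abs_of_pos hh2, div_le_iff₀ hh2, abs_mul, abs_two]
    linarith [hE]
  have c2 : |2*lam^2*(v^2 - (s*h)^4/16)/h^2| ≤ lam^2*s^6*h^4 := by
    rw [abs_div, abs_of_pos hh2, div_le_iff₀ hh2, abs_mul]
    rw [abs_of_nonneg (by positivity : (0:ℝ) ≤ 2*lam^2)]
    have k1 : 2*lam^2*|v^2 - (s*h)^4/16| ≤ 2*lam^2*((s*h)^6/2) :=
      mul_le_mul_of_nonneg_left b2 (by positivity)
    linarith [k1]
  have c3 : |(4/3)*lam^2*(v^3 - (s*h)^6/64)/h^4| ≤ (4/3)*lam^2*s^8*h^4 := by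
    rw [abs_div, abs_of_pos hh4, div_le_iff₀ hh4, abs_mul]
    rw [abs_of_nonneg (by positivity : (0:ℝ) ≤ (4/3)*lam^2)]
    have k1 : (4/3)*lam^2*|v^3 - (s*h)^6/64| ≤ (4/3)*lam^2*((s*h)^8) :=
      mul_le_mul_of_nonneg_left b3 (by positivity)
    linarith [k1]
  have c4 : |(4/3)*lam^4*v^3/h^2| ≤ lam^4*s^6*h^4/48 := by
    rw [abs_div, abs_of_pos hh2, div_le_iff₀ hh2, abs_mul]
    rw [abs_of_nonneg (by positivity : (0:ℝ) ≤ (4/3)*lam^4)]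
    rw [abs_of_nonneg (by positivity : (0:ℝ) ≤ v^3)]
    have k1 : (4/3)*lam^4*v^3 ≤ (4/3)*lam^4*((s*h)^6/64) :=
      mul_le_mul_of_nonneg_left b4 (by positivity)
    linarith [k1]
  -- combine
  have hAT2 : |(-2*v/h^2 + 2*lam^2*v^2/h^2 - (4/3)*lam^2*v^3/h^4 - (4/3)*lam^4*v^3/h^2)
      - (-(s^2/2) + (s ^ 4 / 24 + lam ^ 2 * s ^ 4 / 8 - lam ^ 2 * s ^ 6 / 48) * h ^ 2)|
      ≤ s^6*h^4/720 + s^8*h^6 + lam^2*s^6*h^4 + (4/3)*lam^2*s^8*h^4 + lam^4*s^6*h^4/48 := by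
    rw [hAT, abs_le]
    have d1 := abs_le.mp c1
    have d2 := abs_le.mp c2
    have d3 := abs_le.mp c3
    have d4 := abs_le.mp c4
    have d0 : (0:ℝ) ≤ s^6*h^4 := by positivity
    constructor <;> linarith [d1.1, d1.2, d2.1, d2.2, d3.1, d3.2, d4.1, d4.2]
  -- final assembly
  have hgoal : Real.log (P N ξ') + s ^ 2 / 2
      - (s ^ 4 / 24 + lam ^ 2 * s ^ 4 / 8 - lam ^ 2 * s ^ 6 / 48) * h ^ 2
      = (S - (-(N : ℝ) ^ 2 * ξ' + (N : ℝ) ^ 2 * ξ' ^ 2 / 2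
          - ((N : ℝ) ^ 4 + (N : ℝ) ^ 2) * ξ' ^ 3 / 6))
        + ((-2*v/h^2 + 2*lam^2*v^2/h^2 - (4/3)*lam^2*v^3/h^4 - (4/3)*lam^4*v^3/h^2)
          - (-(s^2/2) + (s ^ 4 / 24 + lam ^ 2 * s ^ 4 / 8 - lam ^ 2 * s ^ 6 / 48) * h ^ 2)) := by
    rw [hlogP, ← hA]; ring
  rw [hgoal]
  have hfinal := abs_add_le (S - (-(N : ℝ) ^ 2 * ξ' + (N : ℝ) ^ 2 * ξ' ^ 2 / 2
      - ((N : ℝ) ^ 4 + (N : ℝ) ^ 2) * ξ' ^ 3 / 6))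
    ((-2*v/h^2 + 2*lam^2*v^2/h^2 - (4/3)*lam^2*v^3/h^4 - (4/3)*lam^4*v^3/h^2)
      - (-(s^2/2) + (s ^ 4 / 24 + lam ^ 2 * s ^ 4 / 8 - lam ^ 2 * s ^ 6 / 48) * h ^ 2))
  have hs8h3 : (0:ℝ) ≤ s^8*h^3 := by positivity
  have hs6h4 : (0:ℝ) ≤ s^6*h^4 := by positivity
  have hh63 : s^8*h^6 ≤ s^8*h^3 :=
    mul_le_mul_of_nonneg_left (pow_le_pow_of_le_one hh0.le hh1.le (by norm_num))
      (pow_nonneg hs0 8)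
  have hh43 : s^8*h^4 ≤ s^8*h^3 :=
    mul_le_mul_of_nonneg_left (pow_le_pow_of_le_one hh0.le hh1.le (by norm_num))
      (pow_nonneg hs0 8)
  have hX := hsum1.trans hEb
  have kk1 : lam^2*(s^8*h^4) ≤ lam^2*(s^8*h^3) := mul_le_mul_of_nonneg_left hh43 (by positivity)
  refine hfinal.trans ?_
  have e2 : (0:ℝ) ≤ lam^2*(s^8*h^3) := by positivity
  have e3 : (0:ℝ) ≤ lam^2*(s^6*h^4) := by positivity
  have e4 : (0:ℝ) ≤ lam^3*(s^6*h^4) := by positivity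
  have e5 : (0:ℝ) ≤ lam^4*(s^8*h^3) := by positivity
  have e6 : (0:ℝ) ≤ lam^4*(s^6*h^4) := by positivity
  have e7 : (0:ℝ) ≤ lam^3*(s^8*h^3) := by positivity
  have kk2 : (4/3*lam^2)*(s^8*h^4) ≤ (4/3*lam^2)*(s^8*h^3) :=
    mul_le_mul_of_nonneg_left hh43 (by positivity)
  linarith [hX, hAT2, hh63, kk1, kk2, hs8h3, hs6h4, e2, e3, e4, e5, e6, e7]
end

section
/- Fix λ > 0 and r ∈ (0, 1/3). There exist constants C > 0 and h₀ > 0 such that for every h ∈ (0, h₀) with N := 1/(λh) a positive integer and every x ∈ ℝ, | (1/π) ∫_0^{h^{−r}} ( P_N(ξ(s)) − e^{−s²/2} ) cos(sx) ds | ≤ C h². -/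
open Real Finset MeasureTheory



lemma log_one_sub_bound {x : ℝ} (h0 : 0 ≤ x) (h2 : x ≤ 1/2) :
    |Real.log (1 - x) + (x + x^2/2)| ≤ 2 * x^3 := by
  have h1 : |x| < 1 := by rw [abs_of_nonneg h0]; linarith
  have H := Real.abs_log_sub_add_sum_range_le h1 2
  rw [abs_of_nonneg h0] at H
  simp only [Finset.sum_range_succ, Finset.sum_range_zero] at H
  have hd : x ^ (2+1) / (1 - x) ≤ 2 * x^3 := by
    rw [div_le_iff₀ (by linarith), show x^(2+1) = x^3 from by ring]
    nlinarith [mul_le_mul_of_nonneg_left h2 (pow_nonneg h0 3)]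
  calc |Real.log (1 - x) + (x + x^2/2)|
      = |(0 + x ^ (0+1) / ((0:ℕ)+1) + x ^ (1+1) / ((1:ℕ)+1)) + Real.log (1 - x)| := by
        push_cast; ring_nf
    _ ≤ x ^ (2+1) / (1 - x) := H
    _ ≤ 2 * x^3 := hd

lemma log_one_add_bound {y : ℝ} (h0 : 0 ≤ y) (h2 : y ≤ 1/2) :
    |Real.log (1 + y) - (y - y^2/2)| ≤ 2 * y^3 := by
  have h1 : |(-y)| < 1 := by rw [abs_neg, abs_of_nonneg h0]; linarith
  have H := Real.abs_log_sub_add_sum_range_le h1 2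
  rw [abs_neg, abs_of_nonneg h0] at H
  simp only [Finset.sum_range_succ, Finset.sum_range_zero] at H
  have hd : y ^ (2+1) / (1 - y) ≤ 2 * y^3 := by
    rw [div_le_iff₀ (by linarith), show y^(2+1) = y^3 from by ring]
    nlinarith [mul_le_mul_of_nonneg_left h2 (pow_nonneg h0 3)]
  calc |Real.log (1 + y) - (y - y^2/2)|
      = |(0 + (-y) ^ (0+1) / ((0:ℕ)+1) + (-y) ^ (1+1) / ((1:ℕ)+1)) + Real.log (1 - (-y))| := by
        push_cast; ring_nf
    _ ≤ y ^ (2+1) / (1 - y) := H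
    _ ≤ 2 * y^3 := hd

lemma sum_two_add_one (N : ℕ) : ∑ m ∈ Finset.range N, (2*(m:ℝ)+1) = (N:ℝ)^2 := by
  induction N with
  | zero => simp
  | succ n ih => rw [Finset.sum_range_succ, ih]; push_cast; ring

set_option maxHeartbeats 1000000 in
lemma key_est (lam h s : ℝ) (N : ℕ) (hlam : 0 < lam) (hh : 0 < h)
    (hN : lam * (N:ℝ) * h = 1) (hs : 0 ≤ s)
    (hsh : s * h ≤ 1) (hs2h : lam * (s^2 * h) ≤ 1)
    (hB : (1 + lam^2) * (s^4 + s^6) * h^2 ≤ 1) :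
    |P N (xi lam h s) - Real.exp (-s^2/2)| ≤
      Real.exp (-s^2/2) * (2 * ((1 + lam^2) * (s^4 + s^6) * h^2)) := by
  set ξ : ℝ := xi lam h s with hxid
  have hξ0 : 0 ≤ ξ := by rw [hxid, xi]; positivity
  have hN0 : (0:ℝ) < N := by
    by_contra hc
    push_neg at hc
    have h1 : lam * (N:ℝ) * h = (lam * h) * (N:ℝ) := by ring
    have h2 : (lam * h) * (N:ℝ) ≤ 0 := mul_nonpos_of_nonneg_of_nonpos (by positivity) hc
    rw [h1] at hN; linarith
  have hξle : ξ ≤ lam^2 * s^2 * h^2 / 2 := by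
    have := Real.sin_sq_le_sq (x := s * h / 2)
    rw [hxid, xi]; nlinarith [sq_nonneg lam]
  have hNξ : (N:ℝ) * ξ ≤ lam * s^2 * h / 2 := by
    have h1 : (N:ℝ) * ξ ≤ (N:ℝ) * (lam^2 * s^2 * h^2 / 2) :=
      mul_le_mul_of_nonneg_left hξle hN0.le
    have h2 : (N:ℝ) * (lam^2 * s^2 * h^2 / 2) = (lam * (N:ℝ) * h) * (lam * s^2 * h / 2) := by
      ring
    rw [h2, hN, one_mul] at h1; exact h1
  have hNξ0 : 0 ≤ (N:ℝ) * ξ := by positivity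
  have hNξhalf : (N:ℝ) * ξ ≤ 1/2 := by nlinarith
  -- per-factor facts
  have hmle : ∀ m ∈ Finset.range N, ((m:ℝ)+1) * ξ ≤ (N:ℝ) * ξ := by
    intro m hm
    have : (m:ℝ) + 1 ≤ N := by
      have := Finset.mem_range.mp hm
      exact_mod_cast Nat.succ_le_of_lt this
    exact mul_le_mul_of_nonneg_right this hξ0
  have hmξ : ∀ m ∈ Finset.range N, (m:ℝ) * ξ ≤ 1/2 ∧ ((m:ℝ)+1) * ξ ≤ 1/2 := by
    intro m hm
    have h1 := hmle m hm
    constructor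
    · nlinarith [mul_le_mul_of_nonneg_right (le_of_lt (lt_add_one (m:ℝ))) hξ0]
    · linarith
  have hapos : ∀ m ∈ Finset.range N, (0:ℝ) < 1 - (m:ℝ) * ξ := by
    intro m hm; have := (hmξ m hm).1; linarith
  have hbpos : ∀ m ∈ Finset.range N, (0:ℝ) < 1 + ((m:ℝ)+1) * ξ := by
    intro m hm
    have : 0 ≤ ((m:ℝ)+1) * ξ := by positivity
    linarith
  have hppos : 0 < P N ξ := by
    rw [P]
    exact Finset.prod_pos fun m hm => div_pos (hapos m hm) (hbpos m hm)
  have hlogP : Real.log (P N ξ) =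
      ∑ m ∈ Finset.range N, (Real.log (1 - (m:ℝ)*ξ) - Real.log (1 + ((m:ℝ)+1)*ξ)) := by
    rw [P, Real.log_prod (fun m hm => div_ne_zero (hapos m hm).ne' (hbpos m hm).ne')]
    exact Finset.sum_congr rfl fun m hm => Real.log_div (hapos m hm).ne' (hbpos m hm).ne'
  -- per-term error bound
  have hterm : ∀ m ∈ Finset.range N,
      |(Real.log (1 - (m:ℝ)*ξ) - Real.log (1 + ((m:ℝ)+1)*ξ))
        + ((2*(m:ℝ)+1) * (ξ - ξ^2/2))| ≤ 4 * ((N:ℝ)*ξ)^3 := by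
    intro m hm
    obtain ⟨hm1, hm2⟩ := hmξ m hm
    have hm0 : 0 ≤ (m:ℝ) * ξ := by positivity
    have hm0' : 0 ≤ ((m:ℝ)+1) * ξ := by positivity
    have A := log_one_sub_bound (x := (m:ℝ)*ξ) hm0 hm1
    have B := log_one_add_bound (y := ((m:ℝ)+1)*ξ) hm0' hm2
    have hcube1 : ((m:ℝ)*ξ)^3 ≤ ((N:ℝ)*ξ)^3 := by
      apply pow_le_pow_left₀ hm0
      nlinarith [hmle m hm, mul_nonneg hξ0 hξ0]
    have hcube2 : (((m:ℝ)+1)*ξ)^3 ≤ ((N:ℝ)*ξ)^3 :=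
      pow_le_pow_left₀ hm0' (hmle m hm) 3
    have heq : (Real.log (1 - (m:ℝ)*ξ) - Real.log (1 + ((m:ℝ)+1)*ξ))
        + ((2*(m:ℝ)+1) * (ξ - ξ^2/2))
      = (Real.log (1 - (m:ℝ)*ξ) + ((m:ℝ)*ξ + ((m:ℝ)*ξ)^2/2))
        - (Real.log (1 + ((m:ℝ)+1)*ξ) - (((m:ℝ)+1)*ξ - (((m:ℝ)+1)*ξ)^2/2)) := by
      ring
    rw [heq]
    calc |_ - _| ≤ |Real.log (1 - (m:ℝ)*ξ) + ((m:ℝ)*ξ + ((m:ℝ)*ξ)^2/2)|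
          + |Real.log (1 + ((m:ℝ)+1)*ξ) - (((m:ℝ)+1)*ξ - (((m:ℝ)+1)*ξ)^2/2)| := abs_sub _ _
      _ ≤ 2 * ((m:ℝ)*ξ)^3 + 2 * (((m:ℝ)+1)*ξ)^3 := add_le_add A B
      _ ≤ 4 * ((N:ℝ)*ξ)^3 := by linarith
  -- sum bound
  have hLsum : |Real.log (P N ξ) + ((N:ℝ)^2 * ξ - (N:ℝ)^2 * ξ^2/2)| ≤
      (N:ℝ) * (4 * ((N:ℝ)*ξ)^3) := by
    have hsplit : Real.log (P N ξ) + ((N:ℝ)^2 * ξ - (N:ℝ)^2 * ξ^2/2)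
        = ∑ m ∈ Finset.range N,
          ((Real.log (1 - (m:ℝ)*ξ) - Real.log (1 + ((m:ℝ)+1)*ξ))
            + ((2*(m:ℝ)+1) * (ξ - ξ^2/2))) := by
      rw [Finset.sum_add_distrib, ← Finset.sum_mul, sum_two_add_one, hlogP]
      ring
    rw [hsplit]
    calc |∑ m ∈ Finset.range N, _| ≤ ∑ m ∈ Finset.range N,
          |(Real.log (1 - (m:ℝ)*ξ) - Real.log (1 + ((m:ℝ)+1)*ξ))
            + ((2*(m:ℝ)+1) * (ξ - ξ^2/2))| := Finset.abs_sum_le_sum_abs _ _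
      _ ≤ ∑ m ∈ Finset.range N, 4 * ((N:ℝ)*ξ)^3 := Finset.sum_le_sum hterm
      _ = (N:ℝ) * (4 * ((N:ℝ)*ξ)^3) := by
          rw [Finset.sum_const, Finset.card_range]; push_cast; ring
  have hE : (N:ℝ) * (4 * ((N:ℝ)*ξ)^3) ≤ lam^2 * s^6 * h^2 / 2 := by
    have h1 : ((N:ℝ)*ξ)^3 ≤ (lam * s^2 * h / 2)^3 := pow_le_pow_left₀ hNξ0 hNξ 3
    have h2 : (N:ℝ) * (4 * ((N:ℝ)*ξ)^3) ≤ (N:ℝ) * (4 * (lam * s^2 * h / 2)^3) := by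
      apply mul_le_mul_of_nonneg_left _ hN0.le
      linarith
    have h4 : (N:ℝ) * (4 * (lam * s^2 * h / 2)^3)
        = (lam * (N:ℝ) * h) * (lam^2 * s^6 * h^2 / 2) := by ring
    rw [h4, hN, one_mul] at h2
    exact h2
  -- N²ξ vs s²/2
  have hNsq : lam^2 * (N:ℝ)^2 * h^2 = 1 := by linear_combination (lam * (N:ℝ) * h + 1) * hN
  have hsinsq : Real.sin (s*h/2)^2 = 1/2 - Real.cos (s*h)/2 := by
    have := Real.sin_sq_eq_half_sub (x := s*h/2)
    rwa [show 2*(s*h/2) = s*h from by ring] at this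
  have hNxi : (N:ℝ)^2 * ξ * h^2 = 1 - Real.cos (s*h) := by
    rw [hxid, xi, hsinsq]; linear_combination (1 - Real.cos (s*h)) * hNsq
  have hcosb : |Real.cos (s*h) - (1 - (s*h)^2/2)| ≤ |s*h|^4 * (5/96) := by
    apply Real.cos_bound
    rw [abs_of_nonneg (by positivity)]; exact hsh
  have hcos : |(N:ℝ)^2 * ξ - s^2/2| ≤ 5/96 * (s^4 * h^2) := by
    have hdiv : (N:ℝ)^2 * ξ - s^2/2 = (1 - Real.cos (s*h) - (s*h)^2/2) / h^2 := by
      rw [eq_div_iff (by positivity : (h:ℝ)^2 ≠ 0)]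
      linear_combination hNxi
    rw [hdiv, abs_div, abs_of_nonneg (le_of_lt (by positivity : (0:ℝ) < h^2)),
      div_le_iff₀ (by positivity : (0:ℝ) < h^2)]
    calc |1 - Real.cos (s*h) - (s*h)^2/2|
        = |Real.cos (s*h) - (1 - (s*h)^2/2)| := by
          rw [show 1 - Real.cos (s*h) - (s*h)^2/2
            = -(Real.cos (s*h) - (1 - (s*h)^2/2)) from by ring, abs_neg]
      _ ≤ |s*h|^4 * (5/96) := hcosb
      _ = 5/96 * (s^4 * h^2) * h^2 := by
          rw [abs_of_nonneg (by positivity : (0:ℝ) ≤ s*h)]; ring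
  -- N²ξ²/2 bound
  have hsq : (N:ℝ)^2 * ξ^2 / 2 ≤ lam^2 * s^4 * h^2 / 8 := by
    have h1 : ((N:ℝ)*ξ)^2 ≤ (lam * s^2 * h / 2)^2 := pow_le_pow_left₀ hNξ0 hNξ 2
    nlinarith [h1]
  -- total Δ bound
  set Δ : ℝ := Real.log (P N ξ) + s^2/2 with hΔd
  have habs : |Δ| ≤ (1 + lam^2) * (s^4 + s^6) * h^2 := by
    have hΔeq : Δ = (Real.log (P N ξ) + ((N:ℝ)^2 * ξ - (N:ℝ)^2 * ξ^2/2))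
        + ((N:ℝ)^2 * ξ^2/2) + (s^2/2 - (N:ℝ)^2 * ξ) := by rw [hΔd]; ring
    have t1 : |Δ| ≤ |Real.log (P N ξ) + ((N:ℝ)^2 * ξ - (N:ℝ)^2 * ξ^2/2)|
        + |(N:ℝ)^2 * ξ^2/2| + |s^2/2 - (N:ℝ)^2 * ξ| := by
      rw [hΔeq]
      exact (abs_add_le _ _).trans (add_le_add_left (abs_add_le _ _) _)
    rw [abs_of_nonneg (by positivity : (0:ℝ) ≤ (N:ℝ)^2 * ξ^2/2),
      abs_sub_comm (s^2/2) ((N:ℝ)^2 * ξ)] at t1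
    have hs4 : (0:ℝ) ≤ s^4 * h^2 := by positivity
    have hs6 : (0:ℝ) ≤ s^6 * h^2 := by positivity
    nlinarith [hLsum, hE, hcos, hsq, mul_nonneg (sq_nonneg lam) hs4,
      mul_nonneg (sq_nonneg lam) hs6]
  have hΔ1 : |Δ| ≤ 1 := le_trans habs hB
  have hPe : P N ξ = Real.exp (-s^2/2) * Real.exp Δ := by
    rw [← Real.exp_add, ← Real.exp_log hppos]
    congr 1
    rw [hΔd]; ring
  rw [hPe, show Real.exp (-s^2/2) * Real.exp Δ - Real.exp (-s^2/2)
      = Real.exp (-s^2/2) * (Real.exp Δ - 1) from by ring, abs_mul,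
    abs_of_pos (Real.exp_pos _)]
  apply mul_le_mul_of_nonneg_left _ (Real.exp_pos _).le
  calc |Real.exp Δ - 1| ≤ 2 * |Δ| := Real.abs_exp_sub_one_le hΔ1
    _ ≤ 2 * ((1 + lam^2) * (s^4 + s^6) * h^2) := by linarith

lemma cont_P (lam h : ℝ) (N : ℕ) : Continuous fun s => P N (xi lam h s) := by
  unfold P xi
  apply continuous_finset_prod
  intro m _
  apply Continuous.div
  · fun_prop
  · fun_prop
  · intro s
    have h1 : (0:ℝ) ≤ 2 * lam ^ 2 * Real.sin (s * h / 2) ^ 2 := by positivity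
    have h2 : (0:ℝ) ≤ (m:ℝ) + 1 := by positivity
    nlinarith [mul_nonneg h2 h1]



/-- the contribution of the low wave number regime (regime I) to the
inverse Fourier representation of the error is `O(h²)`, uniformly in `x`. -/
theorem stmt2 (lam r : ℝ) (hlam : 0 < lam) (hr : 0 < r) (hr3 : r < 1 / 3) :
    ∃ C > (0 : ℝ), ∃ h₀ > (0 : ℝ), ∀ h : ℝ, 0 < h → h < h₀ → ∀ N : ℕ, 0 < N →
      (N : ℝ) = 1 / (lam * h) → ∀ x : ℝ,
      |(1 / Real.pi) * ∫ s in (0 : ℝ)..(h ^ (-r)),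
          (P N (xi lam h s) - Real.exp (-s ^ 2 / 2)) * Real.cos (s * x)|
        ≤ C * h ^ 2 := by
  have hKpos : (0:ℝ) < 1 + lam^2 := by positivity
  -- integrability of the dominating function
  have hgen : ∀ n : ℕ, Integrable (fun x : ℝ => x ^ n * Real.exp (-x^2/2)) := by
    intro n
    have H := integrable_rpow_mul_exp_neg_mul_sq (b := 1/2) (by norm_num)
      (s := (n:ℝ)) ((neg_lt_zero.mpr one_pos).trans_le (Nat.cast_nonneg n))
    have heq : (fun x : ℝ => x ^ n * Real.exp (-x^2/2))
        = fun x : ℝ => x ^ ((n:ℝ)) * Real.exp (-(1/2) * x^2) := by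
      funext x
      rw [Real.rpow_natCast]
      congr 1
      ring
    rw [heq]
    exact H
  have hg : Integrable (fun x : ℝ => (x^4 + x^6) * Real.exp (-x^2/2)) := by
    have := (hgen 4).add (hgen 6)
    have heq : (fun x : ℝ => (x^4 + x^6) * Real.exp (-x^2/2))
        = fun x : ℝ => x^4 * Real.exp (-x^2/2) + x^6 * Real.exp (-x^2/2) := by
      funext x; ring
    rw [heq]
    exact this
  set C0 : ℝ := ∫ x : ℝ, (x^4 + x^6) * Real.exp (-x^2/2) with hC0d
  have hC0 : 0 ≤ C0 := integral_nonneg fun x => by positivity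
  refine ⟨2 * (1 + lam^2) * C0 + 1, by positivity, ?_⟩
  -- choice of h₀
  set p : ℝ := min (1 - 2*r) (2 - 6*r) with hpd
  have hp : 0 < p := lt_min (by linarith) (by linarith)
  set M : ℝ := max (max lam (2 * (1 + lam^2))) 1 with hMd
  have hM1 : (1:ℝ) ≤ M := le_max_right _ _
  have hM0 : (0:ℝ) < M := lt_of_lt_of_le one_pos hM1
  refine ⟨min 1 (M⁻¹ ^ p⁻¹), lt_min one_pos (Real.rpow_pos_of_pos (by positivity) _), ?_⟩
  intro h hh hh0 N hNpos hN x
  have h1 : h < 1 := lt_of_lt_of_le hh0 (min_le_left _ _)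
  have h2 : h < M⁻¹ ^ p⁻¹ := lt_of_lt_of_le hh0 (min_le_right _ _)
  have hhp : h ^ p < M⁻¹ := by
    calc h ^ p < (M⁻¹ ^ p⁻¹) ^ p := Real.rpow_lt_rpow hh.le h2 hp
      _ = M⁻¹ := Real.rpow_inv_rpow (by positivity) hp.ne'
  have hMh : M * h ^ p ≤ 1 := by
    have := mul_le_mul_of_nonneg_left hhp.le hM0.le
    rw [mul_inv_cancel₀ hM0.ne'] at this
    exact this
  have e1 : h ^ (1 - 2*r) ≤ h ^ p :=
    Real.rpow_le_rpow_of_exponent_ge hh h1.le (min_le_left _ _)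
  have e2 : h ^ (2 - 6*r) ≤ h ^ p :=
    Real.rpow_le_rpow_of_exponent_ge hh h1.le (min_le_right _ _)
  have hlamNh : lam * (N:ℝ) * h = 1 := by
    rw [hN]; field_simp
  set T : ℝ := h ^ (-r) with hTd
  have hT0 : 0 < T := Real.rpow_pos_of_pos hh _
  -- pointwise smallness facts on (0, T]
  have hfacts : ∀ s ∈ Set.Ioc (0:ℝ) T,
      s * h ≤ 1 ∧ lam * (s^2 * h) ≤ 1 ∧ (1 + lam^2) * (s^4 + s^6) * h^2 ≤ 1 := by
    intro s hs
    obtain ⟨hs0, hsT⟩ := hs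
    have hs0' : (0:ℝ) ≤ s := hs0.le
    have hpow : ∀ k : ℕ, s ^ k ≤ h ^ (-(k * r)) := by
      intro k
      have h1k : s ^ k ≤ T ^ k := pow_le_pow_left₀ hs0' hsT k
      have h2k : T ^ k = h ^ (-(k * r)) := by
        rw [hTd, ← Real.rpow_natCast (h ^ (-r)) k, ← Real.rpow_mul hh.le]
        congr 1
        ring
      rw [h2k] at h1k
      exact h1k
    -- s * h ≤ 1
    have hsh : s * h ≤ 1 := by
      have hs1 : s ≤ h ^ (-r) := hsT
      have : s * h ≤ h ^ (-r) * h := mul_le_mul_of_nonneg_right hsT hh.le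
      have h3 : h ^ (-r) * h = h ^ (-r + 1) := (Real.rpow_add_one hh.ne' (-r)).symm
      rw [h3] at this
      have h4 : h ^ (-r + 1) ≤ 1 := Real.rpow_le_one hh.le h1.le (by linarith)
      linarith
    refine ⟨hsh, ?_, ?_⟩
    · -- lam * (s² h) ≤ 1
      have q1 : s^2 * h ≤ h ^ (-(2*r)) * h := by
        have := hpow 2
        push_cast at this
        exact mul_le_mul_of_nonneg_right this hh.le
      have q2 : h ^ (-(2*r)) * h = h ^ (1 - 2*r) := by
        rw [← Real.rpow_add_one hh.ne' (-(2*r))]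
        congr 1; ring
      rw [q2] at q1
      have q3 : lam * (s^2 * h) ≤ lam * h ^ (1 - 2*r) :=
        mul_le_mul_of_nonneg_left q1 hlam.le
      have q4 : lam * h ^ (1 - 2*r) ≤ M * h ^ p := by
        apply mul_le_mul ((le_max_left _ _).trans (le_max_left _ _)) e1
          (Real.rpow_nonneg hh.le _) hM0.le
      linarith [hMh]
    · -- (1+lam²)(s⁴+s⁶)h² ≤ 1
      have q4 : s^4 ≤ h ^ (-(4*r)) := by have := hpow 4; push_cast at this; exact this
      have q6 : s^6 ≤ h ^ (-(6*r)) := by have := hpow 6; push_cast at this; exact this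
      have q46 : h ^ (-(4*r)) ≤ h ^ (-(6*r)) :=
        Real.rpow_le_rpow_of_exponent_ge hh h1.le (by linarith)
      have qh2 : h^2 = h ^ ((2:ℕ):ℝ) := (Real.rpow_natCast h 2).symm
      have q5 : (s^4 + s^6) * h^2 ≤ 2 * h ^ (-(6*r)) * h^2 := by
        have : s^4 + s^6 ≤ 2 * h ^ (-(6*r)) := by linarith
        exact mul_le_mul_of_nonneg_right this (by positivity)
      have q7 : h ^ (-(6*r)) * h^2 = h ^ (2 - 6*r) := by
        rw [qh2, ← Real.rpow_add hh]
        congr 1; push_cast; ring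
      have q8 : (1 + lam^2) * ((s^4 + s^6) * h^2) ≤ (1 + lam^2) * (2 * h ^ (2 - 6*r)) := by
        apply mul_le_mul_of_nonneg_left _ hKpos.le
        calc (s^4 + s^6) * h^2 ≤ 2 * h ^ (-(6*r)) * h^2 := q5
          _ = 2 * (h ^ (-(6*r)) * h^2) := by ring
          _ = 2 * h ^ (2 - 6*r) := by rw [q7]
      have q9 : (1 + lam^2) * (2 * h ^ (2 - 6*r)) ≤ M * h ^ p := by
        have : (2 * (1 + lam^2)) * h ^ (2 - 6*r) ≤ M * h ^ p :=
          mul_le_mul ((le_max_right _ _).trans (le_max_left _ _)) e2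
            (Real.rpow_nonneg hh.le _) hM0.le
        linarith
      calc (1 + lam^2) * (s^4 + s^6) * h^2 = (1 + lam^2) * ((s^4 + s^6) * h^2) := by ring
        _ ≤ (1 + lam^2) * (2 * h ^ (2 - 6*r)) := q8
        _ ≤ M * h ^ p := q9
        _ ≤ 1 := hMh
  -- the integrand and its bound
  set f : ℝ → ℝ := fun s => (P N (xi lam h s) - Real.exp (-s ^ 2 / 2)) * Real.cos (s * x)
    with hfd
  have hfc : Continuous f := by
    apply Continuous.mul
    · exact (cont_P lam h N).sub (by fun_prop)
    · fun_prop
  have hbound : ∀ s ∈ Set.Ioc (0:ℝ) T,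
      |f s| ≤ 2 * (1 + lam^2) * h^2 * ((s^4 + s^6) * Real.exp (-s^2/2)) := by
    intro s hs
    obtain ⟨hsh, hs2h, hB⟩ := hfacts s hs
    have hkey := key_est lam h s N hlam hh hlamNh hs.1.le hsh hs2h hB
    have hc : |Real.cos (s * x)| ≤ 1 := Real.abs_cos_le_one _
    calc |f s| = |P N (xi lam h s) - Real.exp (-s^2/2)| * |Real.cos (s * x)| := by
          rw [hfd, abs_mul]
      _ ≤ |P N (xi lam h s) - Real.exp (-s^2/2)| * 1 :=
          mul_le_mul_of_nonneg_left hc (abs_nonneg _)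
      _ = |P N (xi lam h s) - Real.exp (-s^2/2)| := mul_one _
      _ ≤ Real.exp (-s^2/2) * (2 * ((1 + lam^2) * (s^4 + s^6) * h^2)) := hkey
      _ = 2 * (1 + lam^2) * h^2 * ((s^4 + s^6) * Real.exp (-s^2/2)) := by ring
  -- integral estimates
  have hint1 : IntegrableOn (fun s => |f s|) (Set.Ioc 0 T) :=
    ((hfc.abs).intervalIntegrable 0 T).1
  have hgc : Integrable (fun s : ℝ =>
      2 * (1 + lam^2) * h^2 * ((s^4 + s^6) * Real.exp (-s^2/2))) := hg.const_mul _
  have step1 : |∫ s in (0:ℝ)..T, f s| ≤ ∫ s in (0:ℝ)..T, |f s| :=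
    intervalIntegral.abs_integral_le_integral_abs hT0.le
  have step2 : (∫ s in (0:ℝ)..T, |f s|) = ∫ s in Set.Ioc 0 T, |f s| :=
    intervalIntegral.integral_of_le hT0.le
  have step3 : (∫ s in Set.Ioc 0 T, |f s|)
      ≤ ∫ s in Set.Ioc 0 T, 2 * (1 + lam^2) * h^2 * ((s^4 + s^6) * Real.exp (-s^2/2)) :=
    setIntegral_mono_on hint1 hgc.integrableOn measurableSet_Ioc hbound
  have step4 : (∫ s in Set.Ioc 0 T, 2 * (1 + lam^2) * h^2 * ((s^4 + s^6) * Real.exp (-s^2/2)))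
      ≤ ∫ s : ℝ, 2 * (1 + lam^2) * h^2 * ((s^4 + s^6) * Real.exp (-s^2/2)) :=
    setIntegral_le_integral hgc (Filter.Eventually.of_forall fun s => by positivity)
  have step5 : (∫ s : ℝ, 2 * (1 + lam^2) * h^2 * ((s^4 + s^6) * Real.exp (-s^2/2)))
      = 2 * (1 + lam^2) * h^2 * C0 := by
    rw [hC0d, MeasureTheory.integral_const_mul]
  have hItot : |∫ s in (0:ℝ)..T, f s| ≤ 2 * (1 + lam^2) * h^2 * C0 := by
    rw [step2] at step1
    linarith
  have hpi : (0:ℝ) < 1 / Real.pi := by positivity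
  rw [abs_mul, abs_of_pos hpi]
  have hpi1 : 1 / Real.pi ≤ 1 := by
    rw [div_le_one Real.pi_pos]
    linarith [Real.pi_gt_three]
  calc (1 / Real.pi) * |∫ s in (0:ℝ)..T, f s| ≤ 1 * |∫ s in (0:ℝ)..T, f s| :=
        mul_le_mul_of_nonneg_right hpi1 (abs_nonneg _)
    _ = |∫ s in (0:ℝ)..T, f s| := one_mul _
    _ ≤ 2 * (1 + lam^2) * h^2 * C0 := hItot
    _ ≤ (2 * (1 + lam^2) * C0 + 1) * h^2 := by nlinarith [sq_nonneg h]
end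

section
/- Fix λ > 0, r ∈ (0, 1/3) and q > 0. As h → 0⁺ along values of h for which N := 1/(λh) is a positive integer (and h is small enough that 1/(2λ²N) ≤ 1), one has h^{−q} · sup { | P_N(ξ(s)) − e^{−s²/2} | : h^{−r} ≤ s ≤ s_N } → 0, where s_N = (2/h) arcsin(1/√(2λ²N)). -/
open Filter Real in
lemma stmt4_tendsto_aux (q c b : ℝ) (hc : 0 < c) (hb : 0 < b) :
    Tendsto (fun h : ℝ => h ^ (-q) * Real.exp (-b * h ^ (-c)))
      (nhdsWithin 0 (Set.Ioi 0)) (nhds 0) := by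
  have h1 : Tendsto (fun u : ℝ => u ^ (q / c) * Real.exp (-b * u)) atTop (nhds 0) :=
    tendsto_rpow_mul_exp_neg_mul_atTop_nhds_zero _ _ hb
  have h2 : Tendsto (fun t : ℝ => t ^ c) atTop atTop := tendsto_rpow_atTop hc
  have h4 : Tendsto (fun t : ℝ => t ^ q * Real.exp (-b * t ^ c)) atTop (nhds 0) := by
    refine (h1.comp h2).congr' ?_
    filter_upwards [eventually_gt_atTop (0 : ℝ)] with t ht
    have : (t ^ c) ^ (q / c) = t ^ q := by
      rw [← Real.rpow_mul ht.le]
      congr 1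
      field_simp
    simp [Function.comp, this]
  have h5 : Tendsto (fun h : ℝ => h⁻¹) (nhdsWithin 0 (Set.Ioi 0)) atTop :=
    tendsto_inv_nhdsGT_zero
  refine (h4.comp h5).congr' ?_
  filter_upwards [self_mem_nhdsWithin] with h hh
  have hh : (0 : ℝ) < h := hh
  simp only [Function.comp]
  rw [Real.rpow_neg hh.le, Real.rpow_neg hh.le, ← Real.inv_rpow hh.le q,
    ← Real.inv_rpow hh.le c]

/-- in the intermediate wave number regime (regime II),
`h^{-q} · sup_{h^{-r} ≤ s ≤ s_N} |P_N(ξ(s)) - e^{-s²/2}| → 0` as `h → 0⁺` along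
values of `h` with `N = 1/(λh)` a positive integer and `1/(2λ²N) ≤ 1`,
where `s_N = (2/h) arcsin(1/√(2λ²N))`. -/
theorem stmt4 (lam r q : ℝ) (hlam : 0 < lam) (hr : 0 < r) (hr3 : r < 1 / 3)
    (hq : 0 < q) :
    ∀ ε > (0 : ℝ), ∃ h₀ > (0 : ℝ), ∀ h : ℝ, 0 < h → h < h₀ → ∀ N : ℕ, 0 < N →
      (N : ℝ) = 1 / (lam * h) → 1 / (2 * lam ^ 2 * N) ≤ 1 →
      ∀ s : ℝ, h ^ (-r) ≤ s →
        s ≤ (2 / h) * Real.arcsin (1 / Real.sqrt (2 * lam ^ 2 * N)) →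
        h ^ (-q) * |P N (xi lam h s) - Real.exp (-s ^ 2 / 2)| < ε := by
  intro ε hε
  have hπ : (0 : ℝ) < Real.pi := Real.pi_pos
  have hπ2 : (2 : ℝ) ≤ 2 * Real.pi ^ 2 := by nlinarith [Real.pi_gt_three]
  set b : ℝ := 1 / (2 * Real.pi ^ 2) with hb_def
  have hb : 0 < b := by positivity
  have htend := stmt4_tendsto_aux q (2 * r) b (by linarith) hb
  have hev : ∀ᶠ h in nhdsWithin 0 (Set.Ioi 0),
      h ^ (-q) * Real.exp (-b * h ^ (-(2 * r))) < ε :=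
    htend.eventually_lt_const hε
  rw [eventually_nhdsWithin_iff] at hev
  rcases Metric.eventually_nhds_iff.mp hev with ⟨δ, hδ, hball⟩
  refine ⟨min δ (1 / (2 * lam)), by positivity, ?_⟩
  intro h hh hhδ N hN0 hNh hξ1 s hs1 hs2
  have hhδ' : h < δ := lt_of_lt_of_le hhδ (min_le_left _ _)
  have hhl : h < 1 / (2 * lam) := lt_of_lt_of_le hhδ (min_le_right _ _)
  -- key smallness bound
  have hkey : h ^ (-q) * Real.exp (-b * h ^ (-(2 * r))) < ε := by
    apply hball (y := h)
    · simpa [abs_of_pos hh] using hhδ'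
    · exact hh
  -- N ≥ 2
  have hNpos : (0 : ℝ) < (N : ℝ) := by exact_mod_cast hN0
  have hN2 : (2 : ℝ) ≤ (N : ℝ) := by
    rw [hNh, le_div_iff₀ (by positivity : (0:ℝ) < lam * h)]
    rw [lt_div_iff₀ (by positivity : (0:ℝ) < 2 * lam)] at hhl
    nlinarith
  -- s is positive
  have hhr : (0 : ℝ) < h ^ (-r) := Real.rpow_pos_of_pos hh _
  have hspos : 0 < s := lt_of_lt_of_le hhr hs1
  -- A = 2 λ² N
  set A : ℝ := 2 * lam ^ 2 * (N : ℝ) with hA_def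
  have hApos : 0 < A := by positivity
  have hA1 : 1 ≤ A := by
    rw [div_le_one hApos] at hξ1; exact hξ1
  have hsA : 1 ≤ Real.sqrt A := by
    rw [show (1 : ℝ) = Real.sqrt 1 by simp]
    exact Real.sqrt_le_sqrt hA1
  set y : ℝ := 1 / Real.sqrt A with hy_def
  have hy0 : 0 < y := by positivity
  have hy1 : y ≤ 1 := by
    rw [hy_def, div_le_one (by linarith)]; exact hsA
  -- x = s h / 2
  set x : ℝ := s * h / 2 with hx_def
  have hx0 : 0 ≤ x := by positivity
  have hxarc : x ≤ Real.arcsin y := by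
    rw [hx_def]
    have := hs2
    rw [div_mul_eq_mul_div, le_div_iff₀ hh] at this
    linarith
  have harc2 : Real.arcsin y ≤ Real.pi / 2 := Real.arcsin_le_pi_div_two y
  have hx2 : x ≤ Real.pi / 2 := le_trans hxarc harc2
  -- sin x ≤ y
  have hsinx_le : Real.sin x ≤ y := by
    rcases eq_or_lt_of_le hxarc with heq | hlt
    · rw [heq, Real.sin_arcsin (by linarith) hy1]
    · have := Real.strictMonoOn_sin
        (Set.mem_Icc.mpr ⟨by linarith, hx2⟩) (Set.mem_Icc.mpr ⟨by linarith [Real.arcsin_nonneg.mpr hy0.le], harc2⟩) hlt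
      rw [Real.sin_arcsin (by linarith) hy1] at this
      exact this.le
  have hsinx_nonneg : 0 ≤ Real.sin x :=
    Real.sin_nonneg_of_nonneg_of_le_pi hx0 (by linarith)
  -- ξ bounds
  set ξ : ℝ := xi lam h s with hξ_def
  have hξ_nonneg : 0 ≤ ξ := by
    rw [hξ_def, xi]; positivity
  have hξ_le : ξ ≤ 1 / (N : ℝ) := by
    have hsin2 : Real.sin x ^ 2 ≤ y ^ 2 := pow_le_pow_left₀ hsinx_nonneg hsinx_le 2
    have hy2 : y ^ 2 = 1 / A := by
      rw [hy_def, div_pow, one_pow, Real.sq_sqrt hApos.le]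
    have : ξ ≤ 2 * lam ^ 2 * y ^ 2 := by
      rw [hξ_def, xi, ← hx_def]
      exact mul_le_mul_of_nonneg_left hsin2 (by positivity)
    rw [hy2, hA_def] at this
    calc ξ ≤ 2 * lam ^ 2 * (1 / (2 * lam ^ 2 * N)) := this
      _ = 1 / (N : ℝ) := by field_simp
  -- lower bound on ξ
  have hsin_lb : s * h / Real.pi ≤ Real.sin x := by
    have h2 := Real.mul_le_sin hx0 hx2
    have h3 : 2 / Real.pi * x = s * h / Real.pi := by rw [hx_def]; field_simp
    calc s * h / Real.pi = 2 / Real.pi * x := h3.symm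
      _ ≤ Real.sin x := h2
  have hξ_lb : 2 * lam ^ 2 * (s * h / Real.pi) ^ 2 ≤ ξ := by
    rw [hξ_def, xi, ← hx_def]
    have h1 : 0 ≤ s * h / Real.pi := by positivity
    exact mul_le_mul_of_nonneg_left (pow_le_pow_left₀ h1 hsin_lb 2) (by positivity)
  -- ξ N² ≥ 2 s² / π²
  have hξN2 : 2 * s ^ 2 / Real.pi ^ 2 ≤ ξ * (N : ℝ) ^ 2 := by
    have hN2eq : (N : ℝ) ^ 2 = 1 / (lam ^ 2 * h ^ 2) := by
      rw [hNh]; field_simp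
    have := mul_le_mul_of_nonneg_right hξ_lb (by positivity : (0:ℝ) ≤ (N:ℝ)^2)
    calc 2 * s ^ 2 / Real.pi ^ 2
        = 2 * lam ^ 2 * (s * h / Real.pi) ^ 2 * ((N : ℝ) ^ 2) := by
          rw [hN2eq]; field_simp
      _ ≤ ξ * (N : ℝ) ^ 2 := this
  -- P bound
  have hm_le : ∀ m ∈ Finset.range N, (m : ℝ) * ξ ≤ 1 := by
    intro m hm
    have hmN : (m : ℝ) ≤ (N : ℝ) := by
      exact_mod_cast Nat.le_of_lt (Finset.mem_range.mp hm)
    calc (m : ℝ) * ξ ≤ (N : ℝ) * ξ := mul_le_mul_of_nonneg_right hmN hξ_nonneg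
      _ ≤ (N : ℝ) * (1 / N) := mul_le_mul_of_nonneg_left hξ_le hNpos.le
      _ = 1 := by field_simp
  have hP_nonneg : 0 ≤ P N ξ := by
    rw [P]
    apply Finset.prod_nonneg
    intro m hm
    apply div_nonneg
    · linarith [hm_le m hm]
    · have : (0:ℝ) ≤ ((m : ℝ) + 1) * ξ := by positivity
      linarith
  have hP_le : P N ξ ≤ Real.exp (-(ξ * ((N : ℝ) * ((N : ℝ) - 1) / 2))) := by
    have hstep : P N ξ ≤ ∏ m ∈ Finset.range N, Real.exp (-((m : ℝ) * ξ)) := by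
      rw [P]
      apply Finset.prod_le_prod
      · intro m hm
        apply div_nonneg
        · linarith [hm_le m hm]
        · have : (0:ℝ) ≤ ((m : ℝ) + 1) * ξ := by positivity
          linarith
      · intro m hm
        have h1 : (1 - (m : ℝ) * ξ) / (1 + ((m : ℝ) + 1) * ξ) ≤ 1 - (m : ℝ) * ξ := by
          apply div_le_self (by linarith [hm_le m hm])
          have : (0:ℝ) ≤ ((m : ℝ) + 1) * ξ := by positivity
          linarith
        have h2 : 1 - (m : ℝ) * ξ ≤ Real.exp (-((m : ℝ) * ξ)) := by
          have := Real.add_one_le_exp (-((m : ℝ) * ξ))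
          linarith
        linarith
    have key : ∀ n : ℕ, (∑ m ∈ Finset.range n, (m : ℝ)) = n * (n - 1) / 2 := by
      intro n
      induction n with
      | zero => simp
      | succ k ih => rw [Finset.sum_range_succ, ih]; push_cast; ring
    have hsum : (∑ m ∈ Finset.range N, -((m : ℝ) * ξ))
        = -(ξ * ((N : ℝ) * ((N : ℝ) - 1) / 2)) := by
      calc (∑ m ∈ Finset.range N, -((m : ℝ) * ξ))
          = -(∑ m ∈ Finset.range N, (m : ℝ) * ξ) := by
            rw [Finset.sum_neg_distrib]
        _ = -((∑ m ∈ Finset.range N, (m : ℝ)) * ξ) := by rw [Finset.sum_mul]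
        _ = -(ξ * ((N : ℝ) * ((N : ℝ) - 1) / 2)) := by rw [key N]; ring
    calc P N ξ ≤ ∏ m ∈ Finset.range N, Real.exp (-((m : ℝ) * ξ)) := hstep
      _ = Real.exp (∑ m ∈ Finset.range N, -((m : ℝ) * ξ)) := (Real.exp_sum _ _).symm
      _ = Real.exp (-(ξ * ((N : ℝ) * ((N : ℝ) - 1) / 2))) := by rw [hsum]
  -- combine: P ≤ exp(-s²/(2π²))
  have hgauss : ξ * ((N : ℝ) * ((N : ℝ) - 1) / 2) ≥ s ^ 2 / (2 * Real.pi ^ 2) := by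
    have hprod : 0 ≤ (N : ℝ) * ((N : ℝ) - 2) := mul_nonneg hNpos.le (by linarith)
    have expand : (N : ℝ) * ((N : ℝ) - 1) / 2 - (N : ℝ) ^ 2 / 4
        = (N : ℝ) * ((N : ℝ) - 2) / 4 := by ring
    have h1 : (N : ℝ) ^ 2 / 4 ≤ (N : ℝ) * ((N : ℝ) - 1) / 2 := by linarith
    have h2 : ξ * ((N : ℝ) ^ 2 / 4) ≥ s ^ 2 / (2 * Real.pi ^ 2) := by
      have h3 : s ^ 2 / (2 * Real.pi ^ 2) = (2 * s ^ 2 / Real.pi ^ 2) / 4 := by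
        field_simp; ring
      rw [h3, ge_iff_le, div_le_iff₀ (by norm_num : (0:ℝ) < 4)]
      calc 2 * s ^ 2 / Real.pi ^ 2 ≤ ξ * (N : ℝ) ^ 2 := hξN2
        _ = ξ * ((N : ℝ) ^ 2 / 4) * 4 := by ring
    have h4 : ξ * ((N : ℝ) ^ 2 / 4) ≤ ξ * ((N : ℝ) * ((N : ℝ) - 1) / 2) :=
      mul_le_mul_of_nonneg_left h1 hξ_nonneg
    linarith
  set M : ℝ := Real.exp (-(s ^ 2 / (2 * Real.pi ^ 2))) with hM_def
  have hPM : P N ξ ≤ M := by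
    refine le_trans hP_le (Real.exp_le_exp.mpr ?_)
    linarith
  have hEM : Real.exp (-s ^ 2 / 2) ≤ M := by
    apply Real.exp_le_exp.mpr
    rw [neg_div]
    have h5 : s ^ 2 / (2 * Real.pi ^ 2) ≤ s ^ 2 / 2 :=
      div_le_div_of_nonneg_left (sq_nonneg s) two_pos hπ2
    linarith
  have habs : |P N ξ - Real.exp (-s ^ 2 / 2)| ≤ M := by
    rw [abs_sub_le_iff]
    constructor
    · have : 0 ≤ Real.exp (-s ^ 2 / 2) := (Real.exp_pos _).le
      linarith
    · linarith
  -- M ≤ exp(-b h^{-2r})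
  have hr2 : h ^ (-(2 * r)) = (h ^ (-r)) ^ 2 := by
    rw [← Real.rpow_natCast (h ^ (-r)) 2, ← Real.rpow_mul hh.le]
    norm_num
    ring_nf
  have hs2' : h ^ (-(2 * r)) ≤ s ^ 2 := by
    rw [hr2]
    exact pow_le_pow_left₀ hhr.le hs1 2
  have hMexp : M ≤ Real.exp (-b * h ^ (-(2 * r))) := by
    apply Real.exp_le_exp.mpr
    rw [hb_def]
    rw [neg_mul, neg_le_neg_iff, div_mul_eq_mul_div, one_mul]
    gcongr
  -- finish
  have hhq : 0 < h ^ (-q) := Real.rpow_pos_of_pos hh _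
  calc h ^ (-q) * |P N ξ - Real.exp (-s ^ 2 / 2)|
      ≤ h ^ (-q) * Real.exp (-b * h ^ (-(2 * r))) := by
        apply mul_le_mul_of_nonneg_left (le_trans habs hMexp) hhq.le
    _ < ε := hkey
end

section
/- Let N and m be integers with 1 ≤ m ≤ N − 1, and let ξ ∈ [1/(m+1), 1/m]. Then | ∏_{ν=0}^{N−1} (1 − νξ)/(1 + (ν+1)ξ) | ≤ ((m+1)!)² (N−m−1)! / ( (2m+2) (N+m)! ). -/
open Finset

noncomputable def gfac (m ν : ℕ) : ℝ :=
  if ν ≤ m then ((m : ℝ) + 1 - ν) / ((m : ℝ) + ν + 2)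
  else ((ν : ℝ) - m) / ((ν : ℝ) + m + 1)

lemma gfac_nonneg (m ν : ℕ) : 0 ≤ gfac m ν := by
  unfold gfac
  split_ifs with h
  · apply div_nonneg
    · have : (ν : ℝ) ≤ m := Nat.cast_le.2 h
      linarith
    · positivity
  · apply div_nonneg
    · have : (m : ℝ) ≤ ν := Nat.cast_le.2 (Nat.le_of_not_le h)
      linarith
    · positivity

lemma aux1 (m : ℕ) : ∀ k, k ≤ m + 1 →
    ∏ ν ∈ range k, (((m : ℝ) + 1 - ν) / ((m : ℝ) + ν + 2))
      = ((m + 1).factorial : ℝ) ^ 2 / (((m + 1 - k).factorial : ℝ) * ((m + 1 + k).factorial : ℝ)) := by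
  intro k
  induction k with
  | zero =>
    intro _
    simp [pow_two]
    rw [div_self]
    positivity
  | succ k ih =>
    intro hk
    have hk' : k ≤ m := Nat.lt_succ_iff.mp hk
    rw [prod_range_succ, ih (le_of_lt hk)]
    have e1 : m + 1 - k = (m - k) + 1 := by omega
    have e3 : m + 1 + (k + 1) = (m + 1 + k) + 1 := by omega
    have c1 : ((m : ℝ) + 1 - k) = ((m - k : ℕ) : ℝ) + 1 := by
      rw [Nat.cast_sub hk']; ring
    have cf1 : ((m + 1 - k).factorial : ℝ)
        = (((m - k : ℕ) : ℝ) + 1) * ((m - k).factorial : ℝ) := by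
      rw [e1, Nat.factorial_succ]; push_cast; ring
    have cf2 : ((m + 1 + (k + 1)).factorial : ℝ)
        = ((m : ℝ) + k + 2) * ((m + 1 + k).factorial : ℝ) := by
      rw [e3, Nat.factorial_succ]; push_cast; ring
    have e2 : m + 1 - (k + 1) = m - k := by omega
    rw [cf1, cf2, e2, c1, div_mul_div_comm,
      div_eq_div_iff (by positivity) (by positivity)]
    ring

lemma prodg (m : ℕ) : ∀ N, m + 1 ≤ N →
    ∏ ν ∈ range N, gfac m ν
      = ((m + 1).factorial : ℝ) ^ 2 * ((N - m - 1).factorial : ℝ)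
          / ((2 * (m : ℝ) + 2) * ((N + m).factorial : ℝ)) := by
  intro N hN
  induction N, hN using Nat.le_induction with
  | base =>
    have h0 : ∏ ν ∈ range (m + 1), gfac m ν
        = ∏ ν ∈ range (m + 1), (((m : ℝ) + 1 - ν) / ((m : ℝ) + ν + 2)) := by
      apply prod_congr rfl
      intro ν hν
      unfold gfac
      rw [if_pos (Nat.lt_succ_iff.mp (mem_range.mp hν))]
    rw [h0, aux1 m (m + 1) le_rfl]
    have e1 : m + 1 - (m + 1) = 0 := by omega
    have e2 : m + 1 + (m + 1) = (2 * m + 1) + 1 := by omega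
    have e3 : m + 1 - m - 1 = 0 := by omega
    have e4 : m + 1 + m = 2 * m + 1 := by omega
    have cf : ((m + 1 + (m + 1)).factorial : ℝ)
        = (2 * (m : ℝ) + 2) * ((2 * m + 1).factorial : ℝ) := by
      rw [e2, Nat.factorial_succ]; push_cast; ring
    rw [e1, e3, e4, cf, Nat.factorial_zero]
    have h1 : ((2 * m + 1).factorial : ℝ) ≠ 0 := by positivity
    have h2 : (2 * (m : ℝ) + 2) ≠ 0 := by positivity
    rw [Nat.cast_one]
    field_simp
  | succ N hN ih =>
    rw [prod_range_succ, ih]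
    have hNm : ¬ N ≤ m := by omega
    unfold gfac
    rw [if_neg hNm]
    have e1 : N + 1 - m - 1 = (N - m - 1) + 1 := by omega
    have e2 : N + 1 + m = (N + m) + 1 := by omega
    have c1 : ((N - m - 1 : ℕ) : ℝ) = (N : ℝ) - m - 1 := by
      have h : m + 1 ≤ N := hN
      have : N - m - 1 = N - (m + 1) := by omega
      rw [this, Nat.cast_sub h]; push_cast; ring
    have cf1 : ((N + 1 - m - 1).factorial : ℝ)
        = ((N : ℝ) - m) * ((N - m - 1).factorial : ℝ) := by
      rw [e1, Nat.factorial_succ, Nat.cast_mul, Nat.cast_add, Nat.cast_one, c1]; ring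
    have cf2 : ((N + 1 + m).factorial : ℝ)
        = ((N : ℝ) + m + 1) * ((N + m).factorial : ℝ) := by
      rw [e2, Nat.factorial_succ]; push_cast; ring
    rw [cf1, cf2]
    have h1 : ((N - m - 1).factorial : ℝ) ≠ 0 := by positivity
    have h2 : ((N + m).factorial : ℝ) ≠ 0 := by positivity
    have h3 : (N : ℝ) + m + 1 ≠ 0 := by positivity
    have h4 : (2 * (m : ℝ) + 2) ≠ 0 := by positivity
    field_simp

/-- the bound `W_{N,m}` on the Crank–Nicolson Fourier symbol in
wave number regime III, valid for `ξ ∈ [1/(m+1), 1/m]`. -/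
theorem stmt5 (N m : ℕ) (hm : 1 ≤ m) (hmN : m + 1 ≤ N) (ξ : ℝ)
    (hξ : ξ ∈ Set.Icc (1 / ((m : ℝ) + 1)) (1 / (m : ℝ))) :
    |∏ ν ∈ Finset.range N, (1 - (ν : ℝ) * ξ) / (1 + ((ν : ℝ) + 1) * ξ)|
      ≤ ((m + 1).factorial : ℝ) ^ 2 * ((N - m - 1).factorial : ℝ)
          / ((2 * (m : ℝ) + 2) * ((N + m).factorial : ℝ)) := by
  obtain ⟨hξ1, hξ2⟩ := hξ
  have hmpos : (0 : ℝ) < m := by exact_mod_cast hm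
  have hξpos : 0 < ξ := lt_of_lt_of_le (by positivity) hξ1
  have h1 : 1 ≤ ((m : ℝ) + 1) * ξ := by
    rw [div_le_iff₀ (by positivity)] at hξ1
    linarith [hξ1]
  have h2 : (m : ℝ) * ξ ≤ 1 := by
    rw [le_div_iff₀ hmpos] at hξ2
    linarith
  rw [← prodg m N hmN, Finset.abs_prod]
  apply Finset.prod_le_prod
  · intro ν _; exact abs_nonneg _
  · intro ν _
    have hden : (0 : ℝ) < 1 + ((ν : ℝ) + 1) * ξ := by positivity
    unfold gfac
    rw [abs_div, abs_of_pos hden]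
    by_cases hν : ν ≤ m
    · rw [if_pos hν]
      have hνm : (ν : ℝ) ≤ m := Nat.cast_le.2 hν
      have hnum : 0 ≤ 1 - (ν : ℝ) * ξ := by nlinarith
      rw [abs_of_nonneg hnum, div_le_div_iff₀ hden (by positivity)]
      nlinarith [mul_le_mul_of_nonneg_left h1 (show (0:ℝ) ≤ 2 * ν + 1 by positivity)]
    · rw [if_neg hν]
      have hνm : (m : ℝ) + 1 ≤ ν := by
        have h := Nat.succ_le_of_lt (Nat.lt_of_not_le hν)
        exact_mod_cast Nat.cast_le.2 h
      have hnum : 1 - (ν : ℝ) * ξ ≤ 0 := by nlinarith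
      rw [abs_of_nonpos hnum, div_le_div_iff₀ hden (by positivity)]
      nlinarith [mul_nonneg (show (0:ℝ) ≤ 2 * ν + 1 by positivity) (show (0:ℝ) ≤ 1 - m * ξ by linarith)]
end

section
/- Let m* ≥ 1 be an integer and ξ > 0 with η := 1/(ξ(m* + 1/2)) < 1. Then the iterated series ∑_{j=1}^∞ (2/((2j+1) ξ^{2j+1})) ∑_{k=m*+1}^∞ k^{−(2j+1)} converges, and its value is strictly less than (m* + 1/2) η³ / (3(1 − η²)). -/
open Finset

lemma geom_sum_lower (b c : ℝ) (hb : 0 < b) (hbc : b ≤ c) (n : ℕ) :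
    ((n : ℝ) + 1) * Real.sqrt ((b * c) ^ n) ≤ ∑ i ∈ range (n + 1), c ^ i * b ^ (n - i) := by
  have hc : 0 < c := hb.trans_le hbc
  have key : ∀ i ∈ range (n + 1),
      2 * Real.sqrt ((b * c) ^ n) ≤ c ^ i * b ^ (n - i) + c ^ (n - i) * b ^ i := by
    intro i hi
    have hin : i ≤ n := Nat.lt_succ_iff.mp (mem_range.mp hi)
    have hprod : (c ^ i * b ^ (n - i)) * (c ^ (n - i) * b ^ i) = (b * c) ^ n := by
      calc (c ^ i * b ^ (n - i)) * (c ^ (n - i) * b ^ i)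
          = (c ^ i * c ^ (n - i)) * (b ^ (n - i) * b ^ i) := by ring
        _ = c ^ n * b ^ n := by
            rw [← pow_add, ← pow_add, Nat.add_sub_cancel' hin, Nat.sub_add_cancel hin]
        _ = (b * c) ^ n := by rw [mul_pow]; ring
    have h1 : 0 ≤ c ^ i * b ^ (n - i) := by positivity
    have h2 : 0 ≤ c ^ (n - i) * b ^ i := by positivity
    have hs := Real.sq_sqrt (show (0:ℝ) ≤ (b * c) ^ n by positivity)
    have hs0 := Real.sqrt_nonneg ((b * c) ^ n)
    nlinarith [sq_nonneg (c ^ i * b ^ (n - i) - c ^ (n - i) * b ^ i),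
      sq_nonneg (c ^ i * b ^ (n - i) + c ^ (n - i) * b ^ i - 2 * Real.sqrt ((b * c) ^ n))]
  have hrefl : ∑ i ∈ range (n + 1), c ^ (n - i) * b ^ i
      = ∑ i ∈ range (n + 1), c ^ i * b ^ (n - i) := by
    rw [← Finset.sum_range_reflect (fun i => c ^ (n - i) * b ^ i) (n + 1)]
    refine Finset.sum_congr rfl fun i hi => ?_
    have hin : i ≤ n := Nat.lt_succ_iff.mp (mem_range.mp hi)
    simp only [Nat.add_sub_cancel]
    rw [Nat.sub_sub_self hin]
  have h2S : 2 * ∑ i ∈ range (n + 1), c ^ i * b ^ (n - i)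
      = ∑ i ∈ range (n + 1), (c ^ i * b ^ (n - i) + c ^ (n - i) * b ^ i) := by
    rw [Finset.sum_add_distrib, hrefl, two_mul]
  have hcard : ∑ i ∈ range (n + 1), (2 * Real.sqrt ((b * c) ^ n))
      ≤ ∑ i ∈ range (n + 1), (c ^ i * b ^ (n - i) + c ^ (n - i) * b ^ i) :=
    Finset.sum_le_sum key
  rw [Finset.sum_const, card_range, nsmul_eq_mul] at hcard
  push_cast at hcard
  nlinarith [hcard, h2S]



lemma midpoint_step (x : ℝ) (hx : 1 ≤ x) (n : ℕ) :
    1 / x ^ (n + 2) ≤ 1 / (((n : ℝ) + 1) * (x - 1/2) ^ (n + 1))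
      - 1 / (((n : ℝ) + 1) * (x + 1/2) ^ (n + 1)) := by
  set b : ℝ := x - 1/2 with hbdef
  set c : ℝ := x + 1/2 with hcdef
  have hx0 : (0:ℝ) < x := by linarith
  have hb : 0 < b := by simp [hbdef]; linarith
  have hc : 0 < c := by simp [hcdef]; linarith
  have hbc : b ≤ c := by simp [hbdef, hcdef]; linarith
  have hd0 : 0 < b * c := mul_pos hb hc
  have hdx : b * c ≤ x ^ 2 := by simp [hbdef, hcdef]; nlinarith
  set S : ℝ := ∑ i ∈ range (n + 1), c ^ i * b ^ (n - i) with hSdef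
  have hSval : S = c ^ (n + 1) - b ^ (n + 1) := by
    have := geom_sum₂_mul c b (n + 1)
    have hcb : c - b = 1 := by simp [hbdef, hcdef]; ring
    rw [hcb, mul_one] at this
    rw [hSdef, ← this]
    exact Finset.sum_congr rfl fun i _ => by norm_num
  have hS := geom_sum_lower b c hb hbc n
  -- key : (b*c)^(n+1) ≤ x^(n+2) * sqrt((b*c)^n)
  have key : (b * c) ^ (n + 1) ≤ x ^ (n + 2) * Real.sqrt ((b * c) ^ n) := by
    have h1 : (b * c) ^ (n + 1) = Real.sqrt ((b * c) ^ (n + 2) * (b * c) ^ n) := by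
      rw [← pow_add]
      have e : n + 2 + n = (n + 1) * 2 := by ring
      rw [e, pow_mul, Real.sqrt_sq (by positivity)]
    rw [h1, Real.sqrt_mul (by positivity)]
    have h2 : (b * c) ^ (n + 2) ≤ (x ^ (n + 2)) ^ 2 := by
      calc (b * c) ^ (n + 2) ≤ (x ^ 2) ^ (n + 2) := pow_le_pow_left₀ hd0.le hdx _
        _ = (x ^ (n + 2)) ^ 2 := by rw [← pow_mul, ← pow_mul, Nat.mul_comm]
    have h3 : Real.sqrt ((b * c) ^ (n + 2)) ≤ x ^ (n + 2) := by
      have := Real.sqrt_le_sqrt h2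
      rwa [Real.sqrt_sq (by positivity)] at this
    exact mul_le_mul_of_nonneg_right h3 (Real.sqrt_nonneg _)
  have hN1 : (0:ℝ) < (n : ℝ) + 1 := by positivity
  have hbp := pow_pos hb (n + 1)
  have hcp := pow_pos hc (n + 1)
  have hrhs : 1 / (((n : ℝ) + 1) * b ^ (n + 1)) - 1 / (((n : ℝ) + 1) * c ^ (n + 1))
      = S / (((n : ℝ) + 1) * (b * c) ^ (n + 1)) := by
    rw [hSval, mul_pow]
    field_simp
  rw [hrhs, div_le_div_iff₀ (by positivity) (mul_pos hN1 (pow_pos hd0 _))]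
  have hxp : (0:ℝ) < x ^ (n + 2) := pow_pos hx0 _
  nlinarith [mul_le_mul_of_nonneg_right hS hxp.le,
    mul_le_mul_of_nonneg_left key hN1.le]



lemma summ_shift (m p : ℕ) (hp : 1 < p) :
    Summable (fun k : ℕ => 1 / (((k + m + 1 : ℕ) : ℝ)) ^ p) :=
  (summable_nat_add_iff (f := fun n : ℕ => 1 / (n : ℝ) ^ p) (m + 1)).2
    (Real.summable_one_div_nat_pow.2 hp)

lemma tsum_shift_bound (m n : ℕ) (hm : 1 ≤ m) :
    ∑' k : ℕ, 1 / (((k + m + 1 : ℕ) : ℝ)) ^ (n + 2)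
      ≤ 1 / (((n : ℝ) + 1) * ((m : ℝ) + 1/2) ^ (n + 1)) := by
  set G : ℕ → ℝ := fun k => 1 / (((n : ℝ) + 1) * (((k : ℝ) + m) + 1/2) ^ (n + 1)) with hG
  have hGnn : ∀ k : ℕ, 0 ≤ G k := fun k => by positivity
  have hstep : ∀ k : ℕ, 1 / (((k + m + 1 : ℕ) : ℝ)) ^ (n + 2) ≤ G k - G (k + 1) := by
    intro k
    have hm1 : (1:ℝ) ≤ (m : ℝ) := by exact_mod_cast hm
    have hk0 : (0:ℝ) ≤ (k : ℝ) := Nat.cast_nonneg k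
    have hx : (1:ℝ) ≤ (k : ℝ) + m + 1 := by linarith
    have h := midpoint_step ((k : ℝ) + m + 1) hx n
    have e1 : ((k : ℝ) + m + 1) - 1/2 = (k : ℝ) + m + 1/2 := by ring
    have e2 : ((k : ℝ) + m + 1) + 1/2 = ((k : ℝ) + 1) + m + 1/2 := by ring
    rw [e1, e2] at h
    simpa [hG, add_comm, add_left_comm, add_assoc] using h
  have hpart : ∀ N : ℕ,
      ∑ k ∈ range N, 1 / (((k + m + 1 : ℕ) : ℝ)) ^ (n + 2)
        ≤ 1 / (((n : ℝ) + 1) * ((m : ℝ) + 1/2) ^ (n + 1)) := by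
    intro N
    calc ∑ k ∈ range N, 1 / (((k + m + 1 : ℕ) : ℝ)) ^ (n + 2)
        ≤ ∑ k ∈ range N, (G k - G (k + 1)) := Finset.sum_le_sum fun k _ => hstep k
      _ = G 0 - G N := Finset.sum_range_sub' G N
      _ ≤ G 0 := by linarith [hGnn N]
      _ = 1 / (((n : ℝ) + 1) * ((m : ℝ) + 1/2) ^ (n + 1)) := by simp [hG]
  exact Real.tsum_le_of_sum_range_le (fun k => by positivity) hpart



/-- convergence and bound for the iterated series
`∑_{j=1}^∞ (2/((2j+1) ξ^{2j+1})) ∑_{k=m*+1}^∞ k^{−(2j+1)}`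
(the index `j` below corresponds to `j+1` above, so `2j+1` becomes `2j+3`). -/
theorem stmt11 (mstar : ℕ) (hm : 1 ≤ mstar) (ξ : ℝ) (hξ : 0 < ξ)
    (η : ℝ) (hη : η = 1 / (ξ * ((mstar : ℝ) + 1 / 2))) (hη1 : η < 1) :
    (∀ j : ℕ, Summable (fun k : ℕ => 1 / (((k + mstar + 1 : ℕ) : ℝ)) ^ (2 * j + 3))) ∧
    Summable (fun j : ℕ => (2 / ((2 * (j : ℝ) + 3) * ξ ^ (2 * j + 3))) *
        ∑' k : ℕ, 1 / (((k + mstar + 1 : ℕ) : ℝ)) ^ (2 * j + 3)) ∧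
    (∑' j : ℕ, (2 / ((2 * (j : ℝ) + 3) * ξ ^ (2 * j + 3))) *
        ∑' k : ℕ, 1 / (((k + mstar + 1 : ℕ) : ℝ)) ^ (2 * j + 3))
      < ((mstar : ℝ) + 1 / 2) * η ^ 3 / (3 * (1 - η ^ 2)) := by
  set M : ℝ := (mstar : ℝ) + 1 / 2 with hMdef
  have hM : 0 < M := by positivity
  have hη0 : 0 < η := by rw [hη]; positivity
  have hη2 : η ^ 2 < 1 := by nlinarith
  have hηpow : ∀ s : ℕ, η ^ s = 1 / (ξ ^ s * M ^ s) := by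
    intro s; rw [hη, div_pow, one_pow, mul_pow]
  -- abbreviations
  set f : ℕ → ℝ := fun j => (2 / ((2 * (j : ℝ) + 3) * ξ ^ (2 * j + 3))) *
      ∑' k : ℕ, 1 / (((k + mstar + 1 : ℕ) : ℝ)) ^ (2 * j + 3) with hfdef
  set B : ℕ → ℝ := fun j => M * η ^ (2 * j + 3) / 3 with hBdef
  have hT_nonneg : ∀ j : ℕ, 0 ≤ ∑' k : ℕ, 1 / (((k + mstar + 1 : ℕ) : ℝ)) ^ (2 * j + 3) :=
    fun j => tsum_nonneg fun k => by positivity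
  have hcoef_pos : ∀ j : ℕ, 0 < 2 / ((2 * (j : ℝ) + 3) * ξ ^ (2 * j + 3)) := by
    intro j
    have : (0:ℝ) < 2 * (j : ℝ) + 3 := by positivity
    exact div_pos two_pos (mul_pos this (pow_pos hξ _))
  have hf_nonneg : ∀ j : ℕ, 0 ≤ f j :=
    fun j => mul_nonneg (hcoef_pos j).le (hT_nonneg j)
  have hTb : ∀ j : ℕ, ∑' k : ℕ, 1 / (((k + mstar + 1 : ℕ) : ℝ)) ^ (2 * j + 3)
      ≤ 1 / ((2 * (j : ℝ) + 2) * M ^ (2 * j + 2)) := by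
    intro j
    have h := tsum_shift_bound mstar (2 * j + 1) hm
    have e1 : 2 * j + 1 + 2 = 2 * j + 3 := by omega
    have e2 : 2 * j + 1 + 1 = 2 * j + 2 := by omega
    rw [e1, e2] at h
    have e3 : ((2 * j + 1 : ℕ) : ℝ) + 1 = 2 * (j : ℝ) + 2 := by push_cast; ring
    rw [e3] at h
    exact h
  -- generic: f j ≤ B j
  have hfB : ∀ j : ℕ, f j ≤ B j := by
    intro j
    have hP : (0:ℝ) < ξ ^ (2 * j + 3) := pow_pos hξ _
    have hQ : (0:ℝ) < M ^ (2 * j + 2) := pow_pos hM _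
    have hA : (0:ℝ) < 2 * (j : ℝ) + 3 := by positivity
    have hC : (0:ℝ) < 2 * (j : ℝ) + 2 := by positivity
    have step1 : f j ≤ (2 / ((2 * (j : ℝ) + 3) * ξ ^ (2 * j + 3))) *
        (1 / ((2 * (j : ℝ) + 2) * M ^ (2 * j + 2))) :=
      mul_le_mul_of_nonneg_left (hTb j) (hcoef_pos j).le
    refine step1.trans ?_
    have hMpow : M ^ (2 * j + 3) = M ^ (2 * j + 2) * M := by
      have e : 2 * j + 3 = (2 * j + 2) + 1 := by omega
      rw [e, pow_succ]
    rw [hBdef]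
    show _ ≤ M * η ^ (2 * j + 3) / 3
    rw [hηpow (2 * j + 3), hMpow]
    have l : (2 / ((2 * (j : ℝ) + 3) * ξ ^ (2 * j + 3))) *
        (1 / ((2 * (j : ℝ) + 2) * M ^ (2 * j + 2)))
        = 2 / ((2 * (j : ℝ) + 3) * (2 * (j : ℝ) + 2) * (ξ ^ (2 * j + 3) * M ^ (2 * j + 2))) := by
      field_simp
    have r : M * (1 / (ξ ^ (2 * j + 3) * (M ^ (2 * j + 2) * M))) / 3
        = 1 / (3 * (ξ ^ (2 * j + 3) * M ^ (2 * j + 2))) := by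
      field_simp
    rw [l, r, div_le_div_iff₀ (by positivity) (by positivity)]
    have hj : (0:ℝ) ≤ (j : ℝ) := Nat.cast_nonneg j
    nlinarith [mul_pos hP hQ, mul_nonneg (mul_nonneg hj hj) (mul_pos hP hQ).le,
      mul_nonneg hj (mul_pos hP hQ).le]
  -- strict at j = 1
  have hstrict : f 1 < B 1 := by
    have hP : (0:ℝ) < ξ ^ (2 * 1 + 3) := pow_pos hξ _
    have hQ : (0:ℝ) < M ^ (2 * 1 + 2) := pow_pos hM _
    have step1 : f 1 ≤ (2 / ((2 * ((1:ℕ) : ℝ) + 3) * ξ ^ (2 * 1 + 3))) *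
        (1 / ((2 * ((1:ℕ) : ℝ) + 2) * M ^ (2 * 1 + 2))) :=
      mul_le_mul_of_nonneg_left (hTb 1) (hcoef_pos 1).le
    refine step1.trans_lt ?_
    have hMpow : M ^ (2 * 1 + 3) = M ^ (2 * 1 + 2) * M := by norm_num [pow_succ]
    rw [hBdef]
    show _ < M * η ^ (2 * 1 + 3) / 3
    rw [hηpow (2 * 1 + 3), hMpow]
    have l : (2 / ((2 * ((1:ℕ) : ℝ) + 3) * ξ ^ (2 * 1 + 3))) *
        (1 / ((2 * ((1:ℕ) : ℝ) + 2) * M ^ (2 * 1 + 2)))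
        = 2 / (20 * (ξ ^ (2 * 1 + 3) * M ^ (2 * 1 + 2))) := by
      push_cast; field_simp; ring
    have r : M * (1 / (ξ ^ (2 * 1 + 3) * (M ^ (2 * 1 + 2) * M))) / 3
        = 1 / (3 * (ξ ^ (2 * 1 + 3) * M ^ (2 * 1 + 2))) := by
      field_simp
    rw [l, r, div_lt_div_iff₀ (by positivity) (by positivity)]
    nlinarith [mul_pos hP hQ]
  -- summability of B and its tsum
  have hBeq : B = fun j => (M * η ^ 3 / 3) * (η ^ 2) ^ j := by
    funext j
    rw [hBdef]
    show M * η ^ (2 * j + 3) / 3 = _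
    rw [pow_add, pow_mul]
    ring
  have hη2nn : (0:ℝ) ≤ η ^ 2 := sq_nonneg η
  have hBsum : Summable B := by
    rw [hBeq]
    exact (summable_geometric_of_lt_one hη2nn hη2).mul_left _
  have hBtsum : ∑' j, B j = M * η ^ 3 / (3 * (1 - η ^ 2)) := by
    rw [hBeq, tsum_mul_left, tsum_geometric_of_lt_one hη2nn hη2]
    have h1 : (1:ℝ) - η ^ 2 ≠ 0 := by nlinarith
    field_simp
  have hfsum : Summable f := Summable.of_nonneg_of_le hf_nonneg hfB hBsum
  refine ⟨fun j => summ_shift mstar (2 * j + 3) (by omega), hfsum, ?_⟩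
  calc ∑' j, f j < ∑' j, B j :=
        Summable.tsum_lt_tsum_of_nonneg hf_nonneg hfB hstrict hBsum
    _ = M * η ^ 3 / (3 * (1 - η ^ 2)) := hBtsum
end

section
/- Let λ > 0 and let m* ≥ 1 be an integer with 1/m* ≤ 2λ², and let S : [1/m*, 2λ²] → ℝ be continuous. Define, for h ∈ (0,1), F(h) = ∫_{1/m*}^{2λ²} S(ξ) h^{2/ξ} / ( λ√2 · √ξ · √(1 − ξ/(2λ²)) ) dξ. Then there exist C > 0 and h₀ ∈ (0,1) such that |F(h)| ≤ C h^{1/λ²} / √(log(1/h)) for all h ∈ (0, h₀). -/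
open Real MeasureTheory Set intervalIntegral
set_option maxHeartbeats 1600000

/-- the regime-IV integral
`F(h) = ∫_{1/m*}^{2λ²} S(ξ) h^{2/ξ} / (λ√2 √ξ √(1−ξ/(2λ²))) dξ`
satisfies `|F(h)| ≤ C h^{1/λ²} / √(log(1/h))` for small `h`. -/
theorem stmt13 (lam : ℝ) (hlam : 0 < lam) (mstar : ℕ) (hm : 1 ≤ mstar)
    (hm2 : 1 / (mstar : ℝ) ≤ 2 * lam ^ 2) (S : ℝ → ℝ)
    (hS : ContinuousOn S (Set.Icc (1 / (mstar : ℝ)) (2 * lam ^ 2))) :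
    ∃ C > (0 : ℝ), ∃ h₀ ∈ Set.Ioo (0 : ℝ) 1, ∀ h : ℝ, 0 < h → h < h₀ →
      |∫ ξ in (1 / (mstar : ℝ))..(2 * lam ^ 2),
          S ξ * h ^ (2 / ξ) /
            (lam * Real.sqrt 2 * Real.sqrt ξ * Real.sqrt (1 - ξ / (2 * lam ^ 2)))|
        ≤ C * h ^ (1 / lam ^ 2) / Real.sqrt (Real.log (1 / h)) := by
  have hm0 : (0 : ℝ) < (mstar : ℝ) := by exact_mod_cast hm
  set a : ℝ := 1 / (mstar : ℝ) with ha_def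
  set b : ℝ := 2 * lam ^ 2 with hb_def
  have ha : 0 < a := by positivity
  have hb : 0 < b := by positivity
  have hab : a ≤ b := hm2
  clear_value a b
  obtain ⟨M, hM⟩ := isCompact_Icc.exists_bound_of_continuousOn hS
  have hM0 : 0 ≤ M := (norm_nonneg _).trans (hM a ⟨le_rfl, hab⟩)
  have hinvlam : (1 : ℝ) / lam ^ 2 = 2 / b := by rw [hb_def]; field_simp
  refine ⟨M * Real.sqrt b * b * Real.sqrt π / (2 * lam * Real.sqrt a) + 1, ?_,
    1 / 2, ⟨by norm_num, by norm_num⟩, ?_⟩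
  · have h1 : 0 ≤ M * Real.sqrt b * b * Real.sqrt π :=
      mul_nonneg (mul_nonneg (mul_nonneg hM0 (Real.sqrt_nonneg _)) hb.le) (Real.sqrt_nonneg _)
    have h2 : 0 ≤ M * Real.sqrt b * b * Real.sqrt π / (2 * lam * Real.sqrt a) :=
      div_nonneg h1 (by positivity)
    linarith
  intro h hh0 hh2
  have hh1 : h < 1 := by linarith
  set L := Real.log (1 / h) with hL_def
  have hL : 0 < L := Real.log_pos (by rw [lt_div_iff₀ hh0]; linarith)
  have hlogh : Real.log h = -L := by rw [hL_def, one_div, Real.log_inv]; ring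
  set c := 2 / b ^ 2 * L with hc_def
  have hc : 0 < c := by positivity
  clear_value L c
  set φ : ℝ → ℝ := fun u => u ^ ((1 : ℝ) / 2 - 1) * Real.exp (-(c * u)) with hφ_def
  have hφ_int : IntegrableOn φ (Ioi 0) := by
    have h0 := integrableOn_rpow_mul_exp_neg_mul_rpow
      (s := (1 : ℝ) / 2 - 1) (p := 1) (b := c) (by norm_num) zero_lt_one hc
    refine h0.congr_fun (fun x hx => ?_) measurableSet_Ioi
    simp [hφ_def, Real.rpow_one, neg_mul]
  have hφ_nonneg : ∀ u : ℝ, 0 ≤ u → 0 ≤ φ u := fun u hu =>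
    mul_nonneg (Real.rpow_nonneg hu _) (Real.exp_pos _).le
  have hφ_ii : IntervalIntegrable φ volume 0 (b - a) := by
    rw [intervalIntegrable_iff_integrableOn_Ioc_of_le (by linarith)]
    exact hφ_int.mono_set Ioc_subset_Ioi_self
  set K := M * h ^ ((1 : ℝ) / lam ^ 2) * Real.sqrt b / (lam * Real.sqrt 2 * Real.sqrt a)
    with hK_def
  clear_value φ
  have hK0 : 0 ≤ K :=
    div_nonneg (mul_nonneg (mul_nonneg hM0 (Real.rpow_nonneg hh0.le _)) (Real.sqrt_nonneg _))
      (by positivity)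
  clear_value K
  have hg_ii : IntervalIntegrable (fun ξ => K * φ (b - ξ)) volume a b := by
    have h1 := (hφ_ii.comp_sub_left b).const_mul K
    rw [sub_zero, sub_sub_cancel] at h1
    exact h1.symm
  -- pointwise bound
  have hbound : ∀ ξ ∈ Set.uIoc a b,
      ‖S ξ * h ^ (2 / ξ) / (lam * Real.sqrt 2 * Real.sqrt ξ * Real.sqrt (1 - ξ / b))‖
        ≤ K * φ (b - ξ) := by
    intro ξ hξ
    rw [Set.uIoc_of_le hab] at hξ
    obtain ⟨haξ, hξb⟩ := hξ
    have hξ0 : 0 < ξ := ha.trans haξ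
    rcases eq_or_lt_of_le hξb with heq | hξb'
    · rw [heq, div_self hb.ne', sub_self, Real.sqrt_zero, mul_zero, div_zero, norm_zero]
      exact mul_nonneg hK0 (hφ_nonneg _ (by simp))
    · have hbξ : 0 < b - ξ := by linarith
      have h1 : Real.sqrt (1 - ξ / b) = Real.sqrt (b - ξ) / Real.sqrt b := by
        rw [show (1 - ξ / b) = (b - ξ) / b by field_simp, Real.sqrt_div hbξ.le]
      -- key exponent inequality
      have key : 1 / lam ^ 2 + 2 / b ^ 2 * (b - ξ) ≤ 2 / ξ := by
        have hpos : (0 : ℝ) < ξ * b ^ 2 := by positivity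
        have e1 : (2 / ξ) * (ξ * b ^ 2) = 2 * b ^ 2 := by field_simp
        have e2 : (1 / lam ^ 2 + 2 / b ^ 2 * (b - ξ)) * (ξ * b ^ 2)
            = 2 * b * ξ + 2 * (b - ξ) * ξ := by
          rw [hinvlam]; field_simp
        have e3 : 2 * b * ξ + 2 * (b - ξ) * ξ ≤ 2 * b ^ 2 := by nlinarith [sq_nonneg (b - ξ)]
        have := e2.trans_le (e3.trans_eq e1.symm)
        exact le_of_mul_le_mul_right this hpos
      have hexp : h ^ (2 / ξ) ≤ h ^ ((1 : ℝ) / lam ^ 2) * Real.exp (-(c * (b - ξ))) := by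
        rw [Real.rpow_def_of_pos hh0, Real.rpow_def_of_pos hh0, ← Real.exp_add]
        apply Real.exp_le_exp.mpr
        rw [hlogh, hc_def]
        have h2 := mul_le_mul_of_nonneg_left key hL.le
        rw [mul_add] at h2
        nlinarith [h2]
      have hDpos : 0 < lam * Real.sqrt 2 * Real.sqrt ξ * Real.sqrt (1 - ξ / b) := by
        rw [h1]; positivity
      have hD'pos : 0 < lam * Real.sqrt 2 * Real.sqrt a * (Real.sqrt (b - ξ) / Real.sqrt b) := by
        positivity
      rw [Real.norm_eq_abs, abs_div, abs_mul, abs_of_nonneg (Real.rpow_nonneg hh0.le _),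
        abs_of_pos hDpos]
      have hnum : |S ξ| * h ^ (2 / ξ)
          ≤ M * (h ^ ((1 : ℝ) / lam ^ 2) * Real.exp (-(c * (b - ξ)))) := by
        have hSb : |S ξ| ≤ M := hM ξ ⟨haξ.le, hξb⟩
        exact mul_le_mul hSb hexp (Real.rpow_nonneg hh0.le _) hM0
      have hDD : lam * Real.sqrt 2 * Real.sqrt a * (Real.sqrt (b - ξ) / Real.sqrt b)
          ≤ lam * Real.sqrt 2 * Real.sqrt ξ * Real.sqrt (1 - ξ / b) := by
        rw [h1]
        gcongr
        all_goals first | exact Real.sqrt_le_sqrt haξ.le | positivity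
      have heq : K * φ (b - ξ)
          = M * (h ^ ((1 : ℝ) / lam ^ 2) * Real.exp (-(c * (b - ξ))))
            / (lam * Real.sqrt 2 * Real.sqrt a * (Real.sqrt (b - ξ) / Real.sqrt b)) := by
        simp only [hK_def, hφ_def]
        have hr : (b - ξ) ^ ((1 : ℝ) / 2 - 1) = (Real.sqrt (b - ξ))⁻¹ := by
          rw [show ((1 : ℝ) / 2 - 1) = -(1 / 2) by norm_num, Real.rpow_neg hbξ.le,
            ← Real.sqrt_eq_rpow]
        rw [hr]
        have hs2 : Real.sqrt 2 ≠ 0 := by positivity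
        have hsa : Real.sqrt a ≠ 0 := by positivity
        have hsb : Real.sqrt b ≠ 0 := by positivity
        have hsbξ : Real.sqrt (b - ξ) ≠ 0 := by positivity
        field_simp
      rw [heq]
      exact div_le_div₀ (by positivity) hnum hD'pos hDD
  -- main chain
  have step1 : |∫ ξ in a..b, S ξ * h ^ (2 / ξ)
        / (lam * Real.sqrt 2 * Real.sqrt ξ * Real.sqrt (1 - ξ / b))|
      ≤ |∫ ξ in a..b, K * φ (b - ξ)| := by
    rw [← Real.norm_eq_abs]
    exact intervalIntegral.norm_integral_le_abs_of_norm_le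
      ((ae_restrict_mem measurableSet_uIoc).mono hbound) hg_ii
  have step2 : (∫ ξ in a..b, K * φ (b - ξ)) = K * ∫ u in (0 : ℝ)..(b - a), φ u := by
    rw [intervalIntegral.integral_const_mul, intervalIntegral.integral_comp_sub_left φ b,
      sub_self]
  have hI0 : 0 ≤ ∫ u in (0 : ℝ)..(b - a), φ u :=
    intervalIntegral.integral_nonneg (by linarith) (fun u hu => hφ_nonneg u hu.1)
  have hIle : (∫ u in (0 : ℝ)..(b - a), φ u) ≤ (1 / c) ^ ((1 : ℝ) / 2) * Real.Gamma (1 / 2) := by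
    have h1 : (∫ u in (0 : ℝ)..(b - a), φ u) ≤ ∫ t in Ioi 0, φ t := by
      rw [intervalIntegral.integral_of_le (by linarith)]
      refine setIntegral_mono_set hφ_int ?_ (HasSubset.Subset.eventuallyLE Ioc_subset_Ioi_self)
      filter_upwards [ae_restrict_mem measurableSet_Ioi] with u hu
      exact hφ_nonneg u (le_of_lt hu)
    refine h1.trans_eq ?_
    simp only [hφ_def]
    exact Real.integral_rpow_mul_exp_neg_mul_Ioi (by norm_num : (0 : ℝ) < 1 / 2) hc
  have hfinal : K * ((1 / c) ^ ((1 : ℝ) / 2) * Real.Gamma (1 / 2))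
      = M * Real.sqrt b * b * Real.sqrt π / (2 * lam * Real.sqrt a)
        * h ^ ((1 : ℝ) / lam ^ 2) / Real.sqrt L := by
    rw [Real.Gamma_one_half_eq, ← Real.sqrt_eq_rpow, hK_def,
      show (1 : ℝ) / c = b ^ 2 / (2 * L) by rw [hc_def]; field_simp,
      Real.sqrt_div (sq_nonneg b), Real.sqrt_sq hb.le, Real.sqrt_mul (by norm_num : (0:ℝ) ≤ 2)]
    have hs2 : Real.sqrt 2 ≠ 0 := by positivity
    have hsa : Real.sqrt a ≠ 0 := by positivity
    have hsL : Real.sqrt L ≠ 0 := by positivity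
    have h22 : Real.sqrt 2 * Real.sqrt 2 = 2 := Real.mul_self_sqrt (by norm_num)
    field_simp
    linear_combination (-M) * h22
  calc |∫ ξ in a..b, S ξ * h ^ (2 / ξ)
        / (lam * Real.sqrt 2 * Real.sqrt ξ * Real.sqrt (1 - ξ / b))|
      ≤ |∫ ξ in a..b, K * φ (b - ξ)| := step1
    _ = K * ∫ u in (0 : ℝ)..(b - a), φ u := by
        rw [step2, abs_mul, abs_of_nonneg hK0, abs_of_nonneg hI0]
    _ ≤ K * ((1 / c) ^ ((1 : ℝ) / 2) * Real.Gamma (1 / 2)) := by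
        exact mul_le_mul_of_nonneg_left hIle hK0
    _ = M * Real.sqrt b * b * Real.sqrt π / (2 * lam * Real.sqrt a)
          * h ^ ((1 : ℝ) / lam ^ 2) / Real.sqrt L := hfinal
    _ ≤ (M * Real.sqrt b * b * Real.sqrt π / (2 * lam * Real.sqrt a) + 1)
          * h ^ ((1 : ℝ) / lam ^ 2) / Real.sqrt L := by
        gcongr
        linarith
end

section
/- Let λ > 0, B ∈ (0,1), and let f : [0, √B] → ℝ be continuous. For h ∈ (0,1) set A(h) = 1/(1 + √(log(1/h))). Then lim_{h → 0⁺} √(log(1/h)) · ∫_0^{√{A(h)}} f(z) · h^{ (1/λ²) z²/(1−z²) } dz = λ f(0) √π / 2. -/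
open Filter MeasureTheory Set

private noncomputable def s14L (h : ℝ) : ℝ := Real.sqrt (Real.log (1 / h))

private noncomputable def s14T (lam h : ℝ) : ℝ :=
  s14L h * Real.sqrt (1 / (1 + s14L h)) / lam

private noncomputable def s14F (lam : ℝ) (f : ℝ → ℝ) (h : ℝ) : ℝ → ℝ :=
  (Set.Ioc 0 (s14T lam h)).indicator
    (fun η => f (lam / s14L h * η) * Real.exp (-(η ^ 2 / (1 - (lam / s14L h * η) ^ 2))))

private lemma s14_sqrt_atTop : Tendsto Real.sqrt atTop atTop :=
  tendsto_atTop_atTop.2 fun b => ⟨max b 0 ^ 2, fun a ha =>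
    (le_max_left b 0).trans
      (by rw [← Real.sqrt_sq (le_max_right b 0)]; exact Real.sqrt_le_sqrt ha)⟩

private lemma s14_L_atTop : Tendsto s14L (nhdsWithin 0 (Set.Ioi 0)) atTop := by
  apply s14_sqrt_atTop.comp
  have h1 : Tendsto (fun h : ℝ => -Real.log h) (nhdsWithin 0 (Set.Ioi 0)) atTop :=
    tendsto_neg_atBot_atTop.comp Real.tendsto_log_nhdsGT_zero
  exact h1.congr fun h => by rw [one_div, Real.log_inv]

private lemma s14_T_atTop (lam : ℝ) (hlam : 0 < lam) :
    Tendsto (s14T lam) (nhdsWithin 0 (Set.Ioi 0)) atTop := by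
  have hφ : Tendsto (fun x : ℝ => x * Real.sqrt (1 / (1 + x)) / lam) atTop atTop := by
    have hψ : Tendsto (fun x : ℝ => Real.sqrt (x - 1) / lam) atTop atTop :=
      (s14_sqrt_atTop.comp (tendsto_atTop_add_const_right _ (-1) tendsto_id)).atTop_div_const hlam
    apply tendsto_atTop_mono' atTop ?_ (by simpa [sub_eq_add_neg] using hψ)
    filter_upwards [eventually_ge_atTop (1 : ℝ)] with x hx
    have hx0 : (0 : ℝ) ≤ x := le_trans zero_le_one hx
    have h1x : (0 : ℝ) < 1 + x := by linarith
    gcongr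
    have hxx : x * Real.sqrt (1 / (1 + x)) = Real.sqrt (x ^ 2 * (1 / (1 + x))) := by
      rw [Real.sqrt_mul (sq_nonneg x), Real.sqrt_sq hx0]
    rw [hxx]
    apply Real.sqrt_le_sqrt
    rw [mul_one_div, le_div_iff₀ h1x]
    nlinarith
  exact hφ.comp s14_L_atTop

private lemma s14_kT {lam L : ℝ} (hlam : 0 < lam) (hL : 0 < L) :
    lam / L * (L * Real.sqrt (1 / (1 + L)) / lam) = Real.sqrt (1 / (1 + L)) := by
  field_simp <;> ring

private lemma s14_facts {lam B h : ℝ} (hlam : 0 < lam) (hL1 : 1 ≤ s14L h)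
    (hAB : 1 / (1 + s14L h) ≤ B) {η : ℝ} (hη : η ∈ Set.Ioc 0 (s14T lam h)) :
    lam / s14L h * η ∈ Set.Icc 0 (Real.sqrt B) ∧
      0 < 1 - (lam / s14L h * η) ^ 2 ∧
      η ^ 2 ≤ η ^ 2 / (1 - (lam / s14L h * η) ^ 2) := by
  have hL0 : (0 : ℝ) < s14L h := lt_of_lt_of_le one_pos hL1
  have hk0 : (0 : ℝ) < lam / s14L h := div_pos hlam hL0
  have hA0 : (0 : ℝ) ≤ 1 / (1 + s14L h) := by positivity
  have hkT : lam / s14L h * s14T lam h = Real.sqrt (1 / (1 + s14L h)) :=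
    s14_kT hlam hL0
  have hη0 : 0 ≤ lam / s14L h * η := le_of_lt (mul_pos hk0 hη.1)
  have hηA : lam / s14L h * η ≤ Real.sqrt (1 / (1 + s14L h)) := by
    rw [← hkT]; exact mul_le_mul_of_nonneg_left hη.2 hk0.le
  have hsqA : (lam / s14L h * η) ^ 2 ≤ 1 / (1 + s14L h) := by
    calc (lam / s14L h * η) ^ 2 ≤ Real.sqrt (1 / (1 + s14L h)) ^ 2 :=
          pow_le_pow_left₀ hη0 hηA 2
      _ = 1 / (1 + s14L h) := Real.sq_sqrt hA0
  have hA1 : 1 / (1 + s14L h) < 1 := by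
    rw [div_lt_one (by linarith)]; linarith
  have hden : 0 < 1 - (lam / s14L h * η) ^ 2 := by nlinarith
  refine ⟨⟨hη0, hηA.trans (Real.sqrt_le_sqrt hAB)⟩, hden, ?_⟩
  rw [le_div_iff₀ hden]
  nlinarith [sq_nonneg η, sq_nonneg (lam / s14L h * η)]

private lemma s14_key' (lam : ℝ) (hlam : 0 < lam) (f : ℝ → ℝ) (h L : ℝ)
    (hh0 : 0 < h) (hL1 : 1 ≤ L) (hlogh : Real.log h = -(L ^ 2)) :
    L * ∫ z in (0 : ℝ)..Real.sqrt (1 / (1 + L)),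
          f z * h ^ ((1 / lam ^ 2) * z ^ 2 / (1 - z ^ 2))
      = lam * ∫ η, (Set.Ioc (0 : ℝ) (L * Real.sqrt (1 / (1 + L)) / lam)).indicator
          (fun η => f (lam / L * η) * Real.exp (-(η ^ 2 / (1 - (lam / L * η) ^ 2)))) η := by
  have hL0 : (0 : ℝ) < L := lt_of_lt_of_le one_pos hL1
  have hk0 : (0 : ℝ) < lam / L := div_pos hlam hL0
  set T : ℝ := L * Real.sqrt (1 / (1 + L)) / lam with hTdef
  have hT0 : 0 ≤ T := by rw [hTdef]; positivity
  have hkT : lam / L * T = Real.sqrt (1 / (1 + L)) := s14_kT hlam hL0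
  set G : ℝ → ℝ := fun z =>
    f z * Real.exp (Real.log h * ((1 / lam ^ 2) * z ^ 2 / (1 - z ^ 2))) with hGdef
  have step1 : (∫ z in (0 : ℝ)..Real.sqrt (1 / (1 + L)),
        f z * h ^ ((1 / lam ^ 2) * z ^ 2 / (1 - z ^ 2)))
      = ∫ z in (0 : ℝ)..Real.sqrt (1 / (1 + L)), G z := by
    apply intervalIntegral.integral_congr
    intro z _
    rw [hGdef]
    simp only
    rw [Real.rpow_def_of_pos hh0]
  have hcomp := intervalIntegral.integral_comp_mul_left (a := 0) (b := T) G
    (ne_of_gt hk0)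
  rw [mul_zero, hkT, smul_eq_mul] at hcomp
  have hGk : ∀ η : ℝ, G (lam / L * η) =
      f (lam / L * η) * Real.exp (-(η ^ 2 / (1 - (lam / L * η) ^ 2))) := by
    intro η
    rw [hGdef]
    simp only
    congr 1
    congr 1
    rw [hlogh, ← mul_div_assoc]
    have hnum : -L ^ 2 * ((1 / lam ^ 2) * (lam / L * η) ^ 2) = -(η ^ 2) := by
      field_simp
    rw [hnum, neg_div]
  calc L * ∫ z in (0 : ℝ)..Real.sqrt (1 / (1 + L)),
        f z * h ^ ((1 / lam ^ 2) * z ^ 2 / (1 - z ^ 2))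
      = L * ∫ z in (0 : ℝ)..Real.sqrt (1 / (1 + L)), G z := by rw [step1]
    _ = L * (lam / L * ∫ η in (0 : ℝ)..T, G (lam / L * η)) := by
        rw [hcomp, mul_inv_cancel_left₀ (ne_of_gt hk0)]
    _ = lam * ∫ η in (0 : ℝ)..T, G (lam / L * η) := by
        rw [← mul_assoc, mul_div_cancel₀ _ (ne_of_gt hL0)]
    _ = lam * ∫ η in (0 : ℝ)..T,
          f (lam / L * η) * Real.exp (-(η ^ 2 / (1 - (lam / L * η) ^ 2))) := by
        congr 1
        exact intervalIntegral.integral_congr fun η _ => hGk η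
    _ = lam * ∫ η in Set.Ioc (0 : ℝ) T,
          f (lam / L * η) * Real.exp (-(η ^ 2 / (1 - (lam / L * η) ^ 2))) := by
        rw [intervalIntegral.integral_of_le hT0]
    _ = lam * ∫ η, (Set.Ioc (0 : ℝ) T).indicator
          (fun η => f (lam / L * η) * Real.exp (-(η ^ 2 / (1 - (lam / L * η) ^ 2)))) η := by
        rw [MeasureTheory.integral_indicator measurableSet_Ioc]

private lemma s14_key (lam : ℝ) (hlam : 0 < lam) (f : ℝ → ℝ) {h : ℝ}
    (hh0 : 0 < h) (hh1 : h < 1) (hL1 : 1 ≤ s14L h) :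
    Real.sqrt (Real.log (1 / h)) *
        ∫ z in (0 : ℝ)..Real.sqrt (1 / (1 + Real.sqrt (Real.log (1 / h)))),
          f z * h ^ ((1 / lam ^ 2) * z ^ 2 / (1 - z ^ 2))
      = lam * ∫ η, s14F lam f h η := by
  have hlog0 : 0 ≤ Real.log (1 / h) := Real.log_nonneg (one_le_one_div hh0 hh1.le)
  have hlogh : Real.log h = -(s14L h ^ 2) := by
    unfold s14L
    rw [Real.sq_sqrt hlog0, one_div, Real.log_inv, neg_neg]
  exact s14_key' lam hlam f h (s14L h) hh0 hL1 hlogh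

/-- Laplace-type limit for the dominant part of the regime-IV
integral: with `A(h) = 1/(1 + √(log(1/h)))`,
`√(log(1/h)) ∫_0^{√A(h)} f(z) h^{(1/λ²) z²/(1−z²)} dz → λ f(0) √π / 2` as `h → 0⁺`. -/
theorem stmt14 (lam B : ℝ) (hlam : 0 < lam) (hB : 0 < B) (hB1 : B < 1)
    (f : ℝ → ℝ) (hf : ContinuousOn f (Set.Icc 0 (Real.sqrt B))) :
    Tendsto (fun h : ℝ =>
        Real.sqrt (Real.log (1 / h)) *
          ∫ z in (0 : ℝ)..Real.sqrt (1 / (1 + Real.sqrt (Real.log (1 / h)))),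
            f z * h ^ ((1 / lam ^ 2) * z ^ 2 / (1 - z ^ 2)))
      (nhdsWithin 0 (Set.Ioi 0))
      (nhds (lam * f 0 * Real.sqrt Real.pi / 2)) := by
  set l : Filter ℝ := nhdsWithin 0 (Set.Ioi 0) with hldef
  have hBpos : 0 < Real.sqrt B := Real.sqrt_pos.2 hB
  obtain ⟨M, hM⟩ := isCompact_Icc.exists_bound_of_continuousOn hf
  set M' := max M 0 with hM'def
  have hM'0 : 0 ≤ M' := le_max_right _ _
  have hM'le : ∀ x ∈ Set.Icc 0 (Real.sqrt B), |f x| ≤ M' := fun x hx =>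
    (hM x hx).trans (le_max_left _ _)
  have hLtop : Tendsto s14L l atTop := s14_L_atTop
  have hTtop : Tendsto (s14T lam) l atTop := s14_T_atTop lam hlam
  have hk0 : Tendsto (fun h => lam / s14L h) l (nhds 0) :=
    Tendsto.div_atTop tendsto_const_nhds hLtop
  have hev : ∀ᶠ h in l, (0 < h ∧ h < 1) ∧ 1 ≤ s14L h ∧ 1 / (1 + s14L h) ≤ B := by
    filter_upwards [Ioo_mem_nhdsGT_of_mem (Set.mem_Ico.2 ⟨le_refl (0 : ℝ), zero_lt_one⟩),
      hLtop.eventually_ge_atTop (max 1 (1 / B))] with h hIoo hLge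
    have h1 : 1 ≤ s14L h := le_trans (le_max_left _ _) hLge
    refine ⟨⟨hIoo.1, hIoo.2⟩, h1, ?_⟩
    have h2 : 1 / B ≤ s14L h := le_trans (le_max_right _ _) hLge
    rw [div_le_iff₀ (by linarith)]
    have h3 : 1 / B * B ≤ s14L h * B := mul_le_mul_of_nonneg_right h2 hB.le
    rw [one_div, inv_mul_cancel₀ (ne_of_gt hB)] at h3
    nlinarith
  have hDCT : Tendsto (fun h => ∫ η, s14F lam f h η) l
      (nhds (∫ η, (Set.Ioi (0 : ℝ)).indicator
        (fun η => f 0 * Real.exp (-η ^ 2)) η)) := by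
    apply tendsto_integral_filter_of_dominated_convergence
      (fun η => M' * Real.exp (-1 * η ^ 2))
    · -- measurability
      filter_upwards [hev] with h hh
      obtain ⟨⟨hh0, hh1⟩, hL1, hAB⟩ := hh
      have heq : s14F lam f h = (Set.Ioc 0 (s14T lam h)).indicator
          (fun η => f (lam / s14L h * η) *
            Real.exp (-(η ^ 2 / (1 - (lam / s14L h * η) ^ 2)))) := rfl
      rw [heq, aestronglyMeasurable_indicator_iff measurableSet_Ioc]
      apply ContinuousOn.aestronglyMeasurable ?_ measurableSet_Ioc
      apply ContinuousOn.mul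
      · apply hf.comp (Continuous.continuousOn (by continuity))
        intro η hη
        exact (s14_facts hlam hL1 hAB hη).1
      · apply Real.continuous_exp.comp_continuousOn
        apply ContinuousOn.neg
        apply ContinuousOn.div (continuous_pow 2).continuousOn
        · exact (continuous_const.sub ((continuous_const.mul continuous_id).pow 2)).continuousOn
        · intro η hη
          exact ne_of_gt (s14_facts hlam hL1 hAB hη).2.1
    · -- bound
      filter_upwards [hev] with h hh
      obtain ⟨⟨hh0, hh1⟩, hL1, hAB⟩ := hh
      refine MeasureTheory.ae_of_all _ fun η => ?_
      rw [neg_one_mul]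
      by_cases hmem : η ∈ Set.Ioc (0 : ℝ) (s14T lam h)
      · obtain ⟨hmemIcc, hden, hdiv⟩ := s14_facts hlam hL1 hAB hmem
        have heq : s14F lam f h η = f (lam / s14L h * η) *
            Real.exp (-(η ^ 2 / (1 - (lam / s14L h * η) ^ 2))) :=
          Set.indicator_of_mem hmem _
        rw [heq, Real.norm_eq_abs, abs_mul, Real.abs_exp]
        apply mul_le_mul (hM'le _ hmemIcc) _ (Real.exp_pos _).le hM'0
        exact Real.exp_le_exp.2 (neg_le_neg hdiv)
      · have heq : s14F lam f h η = 0 := Set.indicator_of_notMem hmem _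
        rw [heq, norm_zero]
        positivity
    · exact (integrable_exp_neg_mul_sq one_pos).const_mul M'
    · -- pointwise limit
      refine MeasureTheory.ae_of_all _ fun η => ?_
      rcases le_or_gt η 0 with hη | hη
      · have h1 : ∀ h : ℝ, s14F lam f h η = 0 := fun h =>
          Set.indicator_of_notMem (fun hmem => absurd hmem.1 (not_lt.2 hη)) _
        have h2 : (Set.Ioi (0 : ℝ)).indicator (fun η => f 0 * Real.exp (-η ^ 2)) η = 0 :=
          Set.indicator_of_notMem (not_lt.2 hη) _
        simp only [h1, h2]
        exact tendsto_const_nhds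
      · rw [Set.indicator_of_mem (Set.mem_Ioi.2 hη)]
        have hkη : Tendsto (fun h => lam / s14L h * η) l (nhds 0) := by
          simpa using hk0.mul_const η
        have hfpart : Tendsto (fun h => f (lam / s14L h * η)) l (nhds (f 0)) := by
          apply ((hf 0 ⟨le_refl 0, Real.sqrt_nonneg B⟩).tendsto).comp
          rw [tendsto_nhdsWithin_iff]
          refine ⟨hkη, ?_⟩
          filter_upwards [hLtop.eventually_gt_atTop 0,
            hkη.eventually (eventually_le_nhds hBpos)] with h hL hle
          exact ⟨le_of_lt (mul_pos (div_pos hlam hL) hη), hle⟩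
        have hden : Tendsto (fun h => 1 - (lam / s14L h * η) ^ 2) l (nhds 1) := by
          have := (tendsto_const_nhds (x := (1 : ℝ)) (f := l)).sub (hkη.pow 2)
          simpa using this
        have hexp : Tendsto
            (fun h => Real.exp (-(η ^ 2 / (1 - (lam / s14L h * η) ^ 2)))) l
            (nhds (Real.exp (-η ^ 2))) := by
          have hq : Tendsto (fun h => -(η ^ 2 / (1 - (lam / s14L h * η) ^ 2))) l
              (nhds (-(η ^ 2 / 1))) := (Tendsto.div tendsto_const_nhds hden one_ne_zero).neg
          have := (Real.continuous_exp.tendsto _).comp hq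
          simpa [Function.comp_def] using this
        apply (hfpart.mul hexp).congr'
        filter_upwards [hTtop.eventually_ge_atTop η] with h hT
        exact (Set.indicator_of_mem (Set.mem_Ioc.2 ⟨hη, hT⟩)
          (fun η => f (lam / s14L h * η) *
            Real.exp (-(η ^ 2 / (1 - (lam / s14L h * η) ^ 2))))).symm
  have hfinal : (∫ η, (Set.Ioi (0 : ℝ)).indicator
      (fun η => f 0 * Real.exp (-η ^ 2)) η) = f 0 * (Real.sqrt Real.pi / 2) := by
    rw [MeasureTheory.integral_indicator measurableSet_Ioi,
      MeasureTheory.integral_const_mul]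
    congr 1
    have h1 : ∫ η in Set.Ioi (0 : ℝ), Real.exp (-1 * η ^ 2)
        = Real.sqrt (Real.pi / 1) / 2 := integral_gaussian_Ioi 1
    simp only [neg_one_mul, div_one] at h1
    exact h1
  have hmain : Tendsto (fun h => lam * ∫ η, s14F lam f h η) l
      (nhds (lam * f 0 * Real.sqrt Real.pi / 2)) := by
    have h1 := hDCT.const_mul lam
    rw [hfinal] at h1
    convert h1 using 2
    ring
  apply hmain.congr'
  filter_upwards [hev] with h hh
  exact (s14_key lam hlam f hh.1.1 hh.1.2 hh.2.1).symm
end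

section
/- Fix λ > 0 and let m* be the smallest positive integer m with 1/m ≤ 2λ². There exist C > 0 and a positive integer N₀ such that for every integer N ≥ N₀, with h = 1/(λN) and s_{m*} = (2/h) arcsin(1/√(2λ²m*)), and for every x ∈ ℝ, | (1/π) ∫_{s_{m*}}^{π/h} P_N(ξ(s)) cos(sx) ds | ≤ C h^{1/λ²} / √(log(1/h)). -/
open Real Finset

lemma sum_inv_ge_log (c : ℝ) (hc : 0 < c) (a : ℕ) : ∀ b : ℕ, a ≤ b →
    Real.log ((b : ℝ) + c) - Real.log ((a : ℝ) + c) ≤ ∑ m ∈ Finset.Ico a b, 1 / ((m : ℝ) + c) := by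
  intro b hb
  induction b with
  | zero => simp_all
  | succ n ih =>
    rcases Nat.lt_or_ge a (n+1) with hlt | hge
    · have han : a ≤ n := Nat.lt_succ_iff.mp hlt
      have hn : (0:ℝ) < (n:ℝ) + c := by positivity
      have hstep : Real.log ((n:ℝ)+1+c) - Real.log ((n:ℝ)+c) ≤ 1/((n:ℝ)+c) := by
        have h1 : Real.log (((n:ℝ)+1+c)/((n:ℝ)+c)) ≤ ((n:ℝ)+1+c)/((n:ℝ)+c) - 1 :=
          Real.log_le_sub_one_of_pos (by positivity)
        rw [Real.log_div (by positivity) (by positivity)] at h1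
        have : ((n:ℝ)+1+c)/((n:ℝ)+c) - 1 = 1/((n:ℝ)+c) := by field_simp; ring
        linarith [this ▸ h1]
      rw [Finset.sum_Ico_succ_top han]
      have := ih han
      push_cast
      push_cast at this hstep
      linarith
    · have : a = n + 1 := le_antisymm hb hge
      subst this
      simp

lemma prod_ratio_le (a : ℝ) (ha : 0 < a) (mstar N : ℕ) (ham : a ≤ mstar) (hmN : mstar ≤ N) :
    ∏ m ∈ Finset.Ico mstar N, ((m:ℝ) - a) / ((m:ℝ) + 1 + a)
      ≤ Real.exp (-(1 + 2*a) *
          (Real.log ((N:ℝ) + (1 + mstar)) - Real.log ((mstar:ℝ) + (1 + mstar)))) := by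
  have h1 : ∏ m ∈ Finset.Ico mstar N, ((m:ℝ) - a) / ((m:ℝ) + 1 + a)
      ≤ ∏ m ∈ Finset.Ico mstar N, Real.exp (-((1 + 2*a) / ((m:ℝ) + 1 + a))) := by
    apply Finset.prod_le_prod
    · intro m hm
      have hm' : (mstar:ℝ) ≤ (m:ℝ) := by exact_mod_cast (Finset.mem_Ico.mp hm).1
      have h2 : a ≤ (m:ℝ) := ham.trans hm'
      have hd : (0:ℝ) < (m:ℝ) + 1 + a := by positivity
      have hnum : (0:ℝ) ≤ (m:ℝ) - a := by linarith
      positivity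
    · intro m hm
      have hd : (0:ℝ) < (m:ℝ) + 1 + a := by positivity
      have heq : ((m:ℝ) - a)/((m:ℝ) + 1 + a) = 1 + (-((1 + 2*a)/((m:ℝ) + 1 + a))) := by
        field_simp; ring
      rw [heq]
      have := Real.add_one_le_exp (-((1 + 2*a)/((m:ℝ) + 1 + a)))
      linarith
  rw [← Real.exp_sum] at h1
  refine h1.trans (Real.exp_le_exp.mpr ?_)
  have key : (1 + 2*a) * (Real.log ((N:ℝ) + (1 + mstar)) - Real.log ((mstar:ℝ) + (1 + mstar)))
      ≤ ∑ m ∈ Finset.Ico mstar N, (1 + 2*a) / ((m:ℝ) + 1 + a) := by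
    have hlog := sum_inv_ge_log (1 + (mstar:ℝ)) (by positivity) mstar N hmN
    have hterm : ∀ m ∈ Finset.Ico mstar N,
        (1 + 2*a) * (1 / ((m:ℝ) + (1 + mstar))) ≤ (1 + 2*a) / ((m:ℝ) + 1 + a) := by
      intro m hm
      rw [mul_one_div]
      apply div_le_div_of_nonneg_left (by linarith) (by positivity) (by linarith)
    calc (1 + 2*a) * (Real.log ((N:ℝ) + (1 + mstar)) - Real.log ((mstar:ℝ) + (1 + mstar)))
        ≤ (1 + 2*a) * ∑ m ∈ Finset.Ico mstar N, 1 / ((m:ℝ) + (1 + mstar)) := by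
          apply mul_le_mul_of_nonneg_left hlog (by linarith)
      _ = ∑ m ∈ Finset.Ico mstar N, (1 + 2*a) * (1 / ((m:ℝ) + (1 + mstar))) := Finset.mul_sum _ _ _
      _ ≤ _ := Finset.sum_le_sum hterm
  have : ∑ m ∈ Finset.Ico mstar N, -((1 + 2*a) / ((m:ℝ) + 1 + a))
      = -∑ m ∈ Finset.Ico mstar N, (1 + 2*a) / ((m:ℝ) + 1 + a) := by
    rw [Finset.sum_neg_distrib]
  rw [this]
  linarith

lemma P_abs_le (lam : ℝ) (hlam : 0 < lam) (mstar : ℕ) (hpos : 0 < mstar)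
    (hle : 1 / (mstar:ℝ) ≤ 2 * lam ^ 2)
    (hmin : ∀ m : ℕ, 0 < m → m < mstar → 2 * lam ^ 2 < 1 / (m:ℝ))
    (N : ℕ) (hN : mstar ≤ N) (ξ : ℝ) (hξ1 : 1 / (mstar:ℝ) ≤ ξ) (hξ2 : ξ ≤ 2 * lam ^ 2) :
    |P N ξ| ≤ Real.exp (-(1 + 2 * (1/ξ)) * Real.log ((N:ℝ) / (2 * mstar + 1))) := by
  have hms : (0:ℝ) < (mstar:ℝ) := by exact_mod_cast hpos
  have hξ0 : 0 < ξ := lt_of_lt_of_le (by positivity) hξ1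
  set a : ℝ := 1/ξ with ha_def
  have ha : 0 < a := by positivity
  have ham : a ≤ (mstar:ℝ) := by
    rw [ha_def, div_le_iff₀ hξ0]
    rw [div_le_iff₀ hms] at hξ1
    nlinarith
  have habs : |P N ξ| = ∏ m ∈ Finset.range N, |1 - (m:ℝ) * ξ| / (1 + ((m:ℝ) + 1) * ξ) := by
    rw [P, Finset.abs_prod]
    apply Finset.prod_congr rfl
    intro m _
    rw [abs_div, abs_of_pos (show (0:ℝ) < 1 + ((m:ℝ)+1)*ξ by positivity)]
  have hsplit : (Finset.range N) = Finset.Ico 0 mstar ∪ Finset.Ico mstar N := by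
    rw [Finset.range_eq_Ico, Finset.Ico_union_Ico_eq_Ico (Nat.zero_le _) hN]
  have hdisj : Disjoint (Finset.Ico 0 mstar) (Finset.Ico mstar N) := by
    apply Finset.Ico_disjoint_Ico_consecutive
  rw [habs, hsplit, Finset.prod_union hdisj]
  have h1 : ∏ m ∈ Finset.Ico 0 mstar, |1 - (m:ℝ) * ξ| / (1 + ((m:ℝ) + 1) * ξ) ≤ 1 := by
    apply Finset.prod_le_one
    · intro m _; positivity
    · intro m hm
      have hmlt : m < mstar := (Finset.mem_Ico.mp hm).2
      have hnum : |1 - (m:ℝ) * ξ| ≤ 1 := by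
        rw [abs_le]
        constructor
        · rcases Nat.eq_zero_or_pos m with h0 | h0
          · subst h0; simp
          · have := hmin m h0 hmlt
            have hm0 : (0:ℝ) < (m:ℝ) := by exact_mod_cast h0
            rw [lt_div_iff₀ hm0] at this
            nlinarith
        · nlinarith [mul_nonneg (Nat.cast_nonneg m) hξ0.le]
      rw [div_le_one (by positivity)]
      nlinarith
  have h2 : ∏ m ∈ Finset.Ico mstar N, |1 - (m:ℝ) * ξ| / (1 + ((m:ℝ) + 1) * ξ)
      = ∏ m ∈ Finset.Ico mstar N, ((m:ℝ) - a) / ((m:ℝ) + 1 + a) := by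
    apply Finset.prod_congr rfl
    intro m hm
    have hm' : (mstar:ℝ) ≤ (m:ℝ) := by exact_mod_cast (Finset.mem_Ico.mp hm).1
    have hge1 : 1 ≤ (m:ℝ) * ξ := by
      rw [div_le_iff₀ hms] at hξ1
      calc (1:ℝ) ≤ ξ * mstar := hξ1
        _ ≤ (m:ℝ) * ξ := by nlinarith
    rw [abs_of_nonpos (by linarith), ha_def]
    have hd1 : (0:ℝ) < 1 + ((m:ℝ)+1)*ξ := by positivity
    have hd2 : (0:ℝ) < (m:ℝ) + 1 + 1/ξ := by positivity
    rw [div_eq_div_iff hd1.ne' hd2.ne']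
    field_simp
    all_goals first
      | exact Or.inl (by ring)
      | exact Or.inl trivial
      | ring
  rw [h2]
  have h3 := prod_ratio_le a ha mstar N ham hN
  have hprodnn : (0:ℝ) ≤ ∏ m ∈ Finset.Ico mstar N, ((m:ℝ) - a) / ((m:ℝ) + 1 + a) := by
    apply Finset.prod_nonneg
    intro m hm
    have hm' : (mstar:ℝ) ≤ (m:ℝ) := by exact_mod_cast (Finset.mem_Ico.mp hm).1
    have : a ≤ (m:ℝ) := ham.trans hm'
    have : (0:ℝ) ≤ (m:ℝ) - a := by linarith
    positivity
  have h4 : Real.exp (-(1 + 2*a) * (Real.log ((N:ℝ) + (1 + mstar)) - Real.log ((mstar:ℝ) + (1 + mstar))))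
      ≤ Real.exp (-(1 + 2*a) * Real.log ((N:ℝ) / (2 * mstar + 1))) := by
    rw [Real.exp_le_exp]
    have hN0 : (0:ℝ) < (N:ℝ) := lt_of_lt_of_le hms (by exact_mod_cast hN)
    have hlogle : Real.log ((N:ℝ) / (2 * mstar + 1))
        ≤ Real.log ((N:ℝ) + (1 + mstar)) - Real.log ((mstar:ℝ) + (1 + mstar)) := by
      rw [Real.log_div (by positivity) (by positivity)]
      have e1 : Real.log (N:ℝ) ≤ Real.log ((N:ℝ) + (1 + mstar)) :=
        Real.log_le_log (by positivity) (by linarith)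
      have e2 : Real.log ((mstar:ℝ) + (1 + mstar)) = Real.log (2 * (mstar:ℝ) + 1) := by ring_nf
      linarith
    nlinarith [hlogle]
  calc (∏ m ∈ Finset.Ico 0 mstar, |1 - (m:ℝ) * ξ| / (1 + ((m:ℝ) + 1) * ξ)) *
        ∏ m ∈ Finset.Ico mstar N, ((m:ℝ) - a) / ((m:ℝ) + 1 + a)
      ≤ 1 * ∏ m ∈ Finset.Ico mstar N, ((m:ℝ) - a) / ((m:ℝ) + 1 + a) := by
        apply mul_le_mul_of_nonneg_right h1 hprodnn
    _ = ∏ m ∈ Finset.Ico mstar N, ((m:ℝ) - a) / ((m:ℝ) + 1 + a) := one_mul _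
    _ ≤ _ := h3.trans h4

set_option maxHeartbeats 1600000 in
/-- the contribution of wave number regime IV `[s_{m*}, π/h]` to the
error is `O(h^{1/λ²}/√(log(1/h)))`, uniformly in `x`; here `m*` is the smallest
positive integer with `1/m ≤ 2λ²`, `h = 1/(λN)`, and
`s_{m*} = (2/h) arcsin(1/√(2λ²m*))`. -/
theorem stmt16 (lam : ℝ) (hlam : 0 < lam) (mstar : ℕ)
    (hmstar : IsLeast {m : ℕ | 0 < m ∧ 1 / (m : ℝ) ≤ 2 * lam ^ 2} mstar) :
    ∃ C > (0 : ℝ), ∃ N₀ : ℕ, 0 < N₀ ∧ ∀ N : ℕ, N₀ ≤ N →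
      ∀ h : ℝ, h = 1 / (lam * N) → ∀ x : ℝ,
      |(1 / Real.pi) * ∫ s in
          ((2 / h) * Real.arcsin (1 / Real.sqrt (2 * lam ^ 2 * mstar)))..(Real.pi / h),
          P N (xi lam h s) * Real.cos (s * x)|
        ≤ C * h ^ (1 / lam ^ 2) / Real.sqrt (Real.log (1 / h)) := by
  obtain ⟨⟨hm0, hmle⟩, hmin'⟩ := hmstar
  have hmin : ∀ m : ℕ, 0 < m → m < mstar → 2 * lam ^ 2 < 1 / (m:ℝ) := by
    intro m hm hlt
    by_contra hcon
    push_neg at hcon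
    exact absurd (hmin' ⟨hm, hcon⟩) (Nat.not_le.mpr hlt)
  have hms : (0:ℝ) < (mstar:ℝ) := by exact_mod_cast hm0
  set K : ℝ := 2 * (mstar:ℝ) + 1 with hKdef
  have hK1 : (1:ℝ) < K := by simp only [hKdef]; linarith
  have hK0 : (0:ℝ) < K := by linarith
  set p : ℝ := 1 / lam ^ 2 with hpdef
  have hp0 : 0 < p := by positivity
  refine ⟨K * lam^2 * Real.sqrt Real.pi * ((K * lam) ^ p) * Real.sqrt 2, by positivity,
    ⌈lam⌉₊ * (2*mstar+1)^2 + ⌈1/lam⌉₊ + 2*mstar + 2, by positivity, ?_⟩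
  intro N hN h hh x
  -- basic numeric facts
  have hN2m : 2*mstar + 2 ≤ N := le_trans (by omega) hN
  have hNms : mstar ≤ N := by omega
  have hN0 : 0 < N := by omega
  have hNR0 : (0:ℝ) < N := by exact_mod_cast hN0
  have hNK : K + 1 ≤ (N:ℝ) := by
    have : ((2*mstar + 2 : ℕ) : ℝ) ≤ (N:ℝ) := by exact_mod_cast hN2m
    push_cast at this
    simp only [hKdef]; linarith
  have hlamN : 1 < lam * N := by
    have h1 : (⌈1/lam⌉₊ : ℝ) + 1 ≤ (N:ℝ) := by
      have : (⌈1/lam⌉₊ + 1 : ℕ) ≤ N := by omega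
      exact_mod_cast this
    have h2 : 1/lam ≤ (⌈1/lam⌉₊ : ℝ) := Nat.le_ceil _
    have : 1/lam < (N:ℝ) := by linarith
    rw [div_lt_iff₀ hlam] at this
    nlinarith
  have hNK2 : lam * K^2 ≤ (N:ℝ) := by
    have h1 : ((⌈lam⌉₊ * (2*mstar+1)^2 : ℕ) : ℝ) ≤ (N:ℝ) := by
      exact_mod_cast le_trans (by omega) hN
    have h2 : lam ≤ (⌈lam⌉₊ : ℝ) := Nat.le_ceil _
    push_cast at h1
    have h5 : lam * K^2 ≤ (⌈lam⌉₊:ℝ) * K^2 := mul_le_mul_of_nonneg_right h2 (by positivity)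
    have h6 : ((⌈lam⌉₊:ℝ)) * K^2 ≤ (N:ℝ) := by rw [hKdef]; exact h1
    linarith
  have hh0 : 0 < h := by rw [hh]; positivity
  have hhlam : lam * h * N = 1 := by rw [hh]; field_simp
  -- log quantities
  set L : ℝ := Real.log ((N:ℝ) / K) with hLdef
  have hNKgt : 1 < (N:ℝ)/K := by rw [lt_div_iff₀ hK0]; linarith
  have hL : 0 < L := Real.log_pos hNKgt
  have hloginv : Real.log (1/h) ≤ 2 * L := by
    have h1h : 1/h = lam * N := by rw [hh]; field_simp
    have key : lam * N ≤ ((N:ℝ)/K)^2 := by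
      rw [div_pow, le_div_iff₀ (by positivity)]
      nlinarith
    calc Real.log (1/h) = Real.log (lam * N) := by rw [h1h]
      _ ≤ Real.log (((N:ℝ)/K)^2) := Real.log_le_log (by positivity) key
      _ = 2 * L := by rw [Real.log_pow]; push_cast; ring
  have hlog1h : 0 < Real.log (1/h) := by
    apply Real.log_pos
    rw [hh]; rw [one_div_one_div]; exact hlamN
  -- Gaussian parameters
  set b : ℝ := L * h^2 / (lam^2 * Real.pi^2) with hbdef
  have hb : 0 < b := by positivity
  set A : ℝ := Real.exp (-(1 + p) * L) with hAdef
  have hA : 0 < A := Real.exp_pos _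
  set r : ℝ := 1 / Real.sqrt (2 * lam ^ 2 * mstar) with hrdef
  have hX : (0:ℝ) < 2 * lam^2 * mstar := by positivity
  have hr0 : 0 < r := by rw [hrdef]; positivity
  have hr1 : r ≤ 1 := by
    rw [hrdef, div_le_one (Real.sqrt_pos.mpr hX)]
    rw [show (1:ℝ) = Real.sqrt 1 from (Real.sqrt_one).symm]
    apply Real.sqrt_le_sqrt
    rw [div_le_iff₀ hms] at hmle
    nlinarith
  have hr2 : r^2 = 1 / (2*lam^2*mstar) := by
    rw [hrdef, div_pow, one_pow, Real.sq_sqrt hX.le]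
  set sstar : ℝ := (2/h) * Real.arcsin r with hsdef
  have harc0 : 0 ≤ Real.arcsin r := Real.arcsin_nonneg.mpr hr0.le
  have harcpi : Real.arcsin r ≤ Real.pi/2 := Real.arcsin_le_pi_div_two r
  have hs0 : 0 ≤ sstar := by rw [hsdef]; positivity
  have hspi : sstar ≤ Real.pi / h := by
    have h1 : (2/h) * Real.arcsin r ≤ (2/h) * (Real.pi/2) :=
      mul_le_mul_of_nonneg_left harcpi (by positivity)
    have h2 : (2/h) * (Real.pi/2) = Real.pi / h := by field_simp
    rw [hsdef]
    linarith
  -- pointwise bound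
  have hpoint : ∀ s ∈ Set.Icc sstar (Real.pi/h),
      |P N (xi lam h s) * Real.cos (s * x)| ≤ A * Real.exp (-b * (s - Real.pi/h)^2) := by
    intro s hs
    obtain ⟨hs1, hs2⟩ := hs
    have hsh_le : s * h ≤ Real.pi := by rwa [le_div_iff₀ hh0] at hs2
    have hs_nonneg : 0 ≤ s := hs0.trans hs1
    set u : ℝ := s * h / 2 with hudef
    have hu0 : 0 ≤ u := by rw [hudef]; positivity
    have hupi : u ≤ Real.pi / 2 := by rw [hudef]; linarith
    have harcu : Real.arcsin r ≤ u := by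
      have e1 : sstar * h / 2 = Real.arcsin r := by rw [hsdef]; field_simp
      have e2 : sstar * h / 2 ≤ u := by
        rw [hudef]
        have := mul_le_mul_of_nonneg_right hs1 hh0.le
        linarith
      linarith
    have hsinu : r ≤ Real.sin u :=
      (Real.arcsin_le_iff_le_sin ⟨by linarith, hr1⟩
        ⟨by linarith [Real.pi_pos], hupi⟩).mp harcu
    have hsinu0 : 0 < Real.sin u := lt_of_lt_of_le hr0 hsinu
    set sn := Real.sin u with hsndef
    set c := Real.cos u with hcdef
    have hsc : sn^2 + c^2 = 1 := Real.sin_sq_add_cos_sq u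
    have hsn1 : sn^2 ≤ 1 := by linarith only [hsc, sq_nonneg c]
    have hxiu : xi lam h s = 2*lam^2*sn^2 := by rw [xi, ← hudef, hsndef]
    have hxi1 : 1/(mstar:ℝ) ≤ xi lam h s := by
      have h1 : r^2 ≤ sn^2 := pow_le_pow_left₀ hr0.le hsinu 2
      rw [hr2] at h1
      rw [hxiu, div_le_iff₀ hms]
      rw [div_le_iff₀ hX] at h1
      linarith only [h1]
    have hxi2 : xi lam h s ≤ 2*lam^2 := by
      rw [hxiu]
      nlinarith only [hsn1, sq_nonneg lam]
    have hxi0 : 0 < xi lam h s := lt_of_lt_of_le (by positivity) hxi1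
    have hP := P_abs_le lam hlam mstar hm0 hmle hmin N hNms (xi lam h s) hxi1 hxi2
    have hcos : (Real.pi - s*h)/Real.pi ≤ c := by
      have j1 := Real.mul_le_sin (x := Real.pi/2 - u) (by linarith only [hupi]) (by linarith only [hu0, Real.pi_pos])
      rw [Real.sin_pi_div_two_sub] at j1
      have j2 : (Real.pi - s*h)/Real.pi = 2/Real.pi * (Real.pi/2 - u) := by
        rw [hudef]; field_simp
      rw [j2, hcdef]
      exact j1
    have hcos0 : 0 ≤ (Real.pi - s*h)/Real.pi := by
      apply div_nonneg (by linarith only [hsh_le]) Real.pi_pos.le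
    have e2 : (Real.pi - s*h)^2 ≤ c^2 * Real.pi^2 := by
      have j4 : ((Real.pi - s*h)/Real.pi)^2 ≤ c^2 := pow_le_pow_left₀ hcos0 hcos 2
      rw [div_pow, div_le_iff₀ (by positivity : (0:ℝ) < Real.pi^2)] at j4
      exact j4
    have claim : (Real.pi - s*h)^2/(lam^2*Real.pi^2) ≤ 2*(1/(xi lam h s)) - p := by
      rw [hxiu, hpdef, div_le_iff₀ (by positivity : (0:ℝ) < lam^2*Real.pi^2)]
      have expand : (2*(1/(2*lam^2*sn^2)) - 1/lam^2) * (lam^2*Real.pi^2)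
          = Real.pi^2 * (1 - sn^2)/sn^2 := by
        field_simp
      rw [expand, le_div_iff₀ (by positivity : (0:ℝ) < sn^2)]
      nlinarith only [e2, hsc, hsn1,
        mul_nonneg (sq_nonneg (Real.pi - s*h)) (show (0:ℝ) ≤ 1 - sn^2 by linarith only [hsn1])]
    have hkey : (1+p)*L + b*(s - Real.pi/h)^2 ≤ (1 + 2*(1/(xi lam h s))) * L := by
      have hsq : (s - Real.pi/h)^2 * h^2 = (Real.pi - s*h)^2 := by
        field_simp
        ring
      have e1 : b*(s - Real.pi/h)^2 = L * ((Real.pi - s*h)^2/(lam^2*Real.pi^2)) := by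
        rw [hbdef, ← hsq]
        field_simp
      rw [e1]
      have j5 := mul_le_mul_of_nonneg_left claim hL.le
      linarith only [j5]
    calc |P N (xi lam h s) * Real.cos (s*x)|
        ≤ |P N (xi lam h s)| := by
          rw [abs_mul]
          exact mul_le_of_le_one_right (abs_nonneg _) (Real.abs_cos_le_one _)
      _ ≤ Real.exp (-(1 + 2*(1/(xi lam h s))) * L) := hP
      _ ≤ A * Real.exp (-b*(s - Real.pi/h)^2) := by
          rw [hAdef, ← Real.exp_add]
          apply Real.exp_le_exp.mpr
          linarith only [hkey]
  -- continuity and integrability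
  set d : ℝ := Real.pi / h with hddef
  have hxicont : Continuous (fun s => xi lam h s) := by
    unfold xi; fun_prop
  have hxinonneg : ∀ s : ℝ, 0 ≤ xi lam h s := fun s => by
    rw [xi]; positivity
  have hPcont : Continuous (fun s => P N (xi lam h s) * Real.cos (s * x)) := by
    apply Continuous.mul
    · unfold P
      apply continuous_finset_prod
      intro m _
      apply Continuous.div
      · exact continuous_const.sub (continuous_const.mul hxicont)
      · exact continuous_const.add (continuous_const.mul hxicont)
      · intro s
        have h1 : 0 ≤ xi lam h s := hxinonneg s
        have h2 : (0:ℝ) ≤ ((m:ℝ)+1) * xi lam h s :=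
          mul_nonneg (by positivity) h1
        have : (0:ℝ) < 1 + ((m:ℝ)+1) * xi lam h s := by linarith only [h2]
        exact this.ne'
    · fun_prop
  have hgint : MeasureTheory.Integrable (fun s => A * Real.exp (-b*(s - d)^2)) :=
    ((integrable_exp_neg_mul_sq hb).comp_sub_right d).const_mul A
  have hgcont : Continuous (fun s => A * Real.exp (-b*(s - d)^2)) := by fun_prop
  have step1 : |∫ s in sstar..d, P N (xi lam h s) * Real.cos (s*x)| ≤
      ∫ s in sstar..d, |P N (xi lam h s) * Real.cos (s*x)| :=
    intervalIntegral.abs_integral_le_integral_abs hspi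
  have step2 : (∫ s in sstar..d, |P N (xi lam h s) * Real.cos (s*x)|) ≤
      ∫ s in sstar..d, A * Real.exp (-b*(s - d)^2) :=
    intervalIntegral.integral_mono_on hspi (hPcont.abs.intervalIntegrable _ _)
      (hgcont.intervalIntegrable _ _) hpoint
  have step3 : (∫ s in sstar..d, A * Real.exp (-b*(s-d)^2)) ≤
      ∫ s : ℝ, A * Real.exp (-b*(s-d)^2) := by
    rw [intervalIntegral.integral_of_le hspi]
    apply MeasureTheory.setIntegral_le_integral hgint
    filter_upwards with s
    exact mul_nonneg hA.le (Real.exp_nonneg _)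
  have step4 : (∫ s : ℝ, A * Real.exp (-b*(s-d)^2)) = A * Real.sqrt (Real.pi / b) := by
    rw [MeasureTheory.integral_const_mul]
    congr 1
    exact (MeasureTheory.integral_sub_right_eq_self
      (fun y => Real.exp (-b*y^2)) d).trans (integral_gaussian b)
  have hbound : |(1/Real.pi) * ∫ s in sstar..d, P N (xi lam h s) * Real.cos (s*x)|
      ≤ (1/Real.pi) * (A * Real.sqrt (Real.pi / b)) := by
    rw [abs_mul, abs_of_pos (by positivity : (0:ℝ) < 1/Real.pi)]
    apply mul_le_mul_of_nonneg_left _ (by positivity)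
    linarith only [step1, step2, step3, step4]
  refine hbound.trans ?_
  -- arithmetic endgame
  have hKN : K/(N:ℝ) = K * lam * h := by
    rw [hh]; field_simp
  have hexpL : Real.exp (-L) = K * lam * h := by
    rw [Real.exp_neg, hLdef, Real.exp_log (by positivity), inv_div]
    exact hKN
  have hKlh : (0:ℝ) < K * lam * h := by positivity
  have hexpP : Real.exp (-(p*L)) = (K*lam) ^ p * h ^ p := by
    have h1 : ((N:ℝ)/K) ^ (-p) = Real.exp (-(p*L)) := by
      rw [Real.rpow_def_of_pos (by positivity), hLdef]
      congr 1
      ring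
    rw [← h1, Real.rpow_neg (by positivity), ← Real.inv_rpow (by positivity), inv_div,
      hKN, show K * lam * h = (K*lam) * h by ring,
      Real.mul_rpow (by positivity) hh0.le]
  have hA_eq : A = (K*lam*h) * ((K*lam) ^ p * h ^ p) := by
    rw [hAdef, show -(1+p)*L = -L + -(p*L) by ring, Real.exp_add, hexpL, hexpP]
  have hsqrtb : Real.sqrt (Real.pi/b) = Real.pi * Real.sqrt Real.pi * lam / (h * Real.sqrt L) := by
    have hval : Real.pi/b = (Real.pi * Real.sqrt Real.pi * lam / (h * Real.sqrt L))^2 := by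
      rw [hbdef, div_pow, mul_pow, mul_pow, Real.sq_sqrt Real.pi_pos.le,
        mul_pow, Real.sq_sqrt hL.le]
      field_simp
    rw [hval, Real.sqrt_sq (by positivity)]
  rw [hA_eq, hsqrtb]
  have hsqrtlog : Real.sqrt (Real.log (1/h)) ≤ Real.sqrt 2 * Real.sqrt L := by
    rw [← Real.sqrt_mul (by norm_num : (0:ℝ) ≤ 2) L]
    exact Real.sqrt_le_sqrt hloginv
  have hsL : 0 < Real.sqrt L := Real.sqrt_pos.mpr hL
  have hslog : 0 < Real.sqrt (Real.log (1/h)) := Real.sqrt_pos.mpr hlog1h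
  have hrp : 0 < (K*lam) ^ p := Real.rpow_pos_of_pos (by positivity) p
  have hhp : 0 < h ^ p := Real.rpow_pos_of_pos hh0 p
  have hLHS : (1/Real.pi) * ((K*lam*h)*((K*lam)^p*h^p) *
        (Real.pi*Real.sqrt Real.pi*lam/(h*Real.sqrt L)))
      = K*lam^2*Real.sqrt Real.pi*((K*lam)^p)*(h^p)/Real.sqrt L := by
    field_simp
  rw [hLHS, div_le_div_iff₀ hsL hslog]
  have hnn : (0:ℝ) ≤ K*lam^2*Real.sqrt Real.pi*((K*lam)^p)*(h^p) := by positivity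
  have hfin := mul_le_mul_of_nonneg_left hsqrtlog hnn
  nlinarith only [hfin]
end
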